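/- arXiv:1610.05365 — 7 statements merged into one kernel-verified Lean document; each statement's English description precedes it below -/
import Mathlib

section
/- Every non-Abelian Lie algebra containing a codimension 1 Abelian subalgebra also contains a codimension 1 Abelian ideal. -/
/-- A Lie algebra is almost Abelian if it is non-Abelian and possesses an Abelian ideal of
codimension 1 (as an `F`-vector subspace). -/
def IsAlmostAbelian (F L : Type*) [Field F] [LieRing L] [LieAlgebra F L] : Prop :=
  ¬IsLieAbelian L ∧
    ∃ I : LieIdeal F L, IsLieAbelian I ∧ Module.rank F (L ⧸ I.toSubmodule) = 1

/-- Every non-Abelian Lie algebra containing a codimension 1 Abelian subalgebra also contains a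
codimension 1 Abelian ideal. -/
theorem stmt0 (F L : Type*) [Field F] [LieRing L] [LieAlgebra F L]
    (hna : ¬IsLieAbelian L) (S : LieSubalgebra F L) (hS : IsLieAbelian S)
    (hcod : Module.rank F (L ⧸ S.toSubmodule) = 1) :
    ∃ I : LieIdeal F L, IsLieAbelian I ∧ Module.rank F (L ⧸ I.toSubmodule) = 1 := by
  -- brackets of two elements of S vanish
  have hSb : ∀ a b : L, a ∈ S → b ∈ S → ⁅a, b⁆ = 0 := by
    intro a b ha hb
    have := hS.trivial ⟨a, ha⟩ ⟨b, hb⟩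
    exact congrArg Subtype.val this
  by_cases hid : ∀ (l s : L), s ∈ S → ⁅l, s⁆ ∈ S
  · refine ⟨⟨S.toSubmodule, fun {x m} hm => hid x m hm⟩, ⟨fun a b => ?_⟩, hcod⟩
    exact Subtype.ext (hSb a.1 b.1 a.2 b.2)
  push_neg at hid
  obtain ⟨l0, s1, hs1, hnot⟩ := hid
  -- get a spanning vector of the quotient
  obtain ⟨v0, hv0ne, hv0⟩ := rank_eq_one_iff.mp hcod
  obtain ⟨x, rfl⟩ := Submodule.Quotient.mk_surjective S.toSubmodule v0
  have hxS : x ∉ S := by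
    intro hx
    exact hv0ne ((Submodule.Quotient.mk_eq_zero _).mpr hx)
  -- decomposition of any element
  have dec : ∀ l : L, ∃ c : F, l - c • x ∈ S := by
    intro l
    obtain ⟨r, hr⟩ := hv0 (Submodule.Quotient.mk l)
    refine ⟨r, ?_⟩
    have : Submodule.Quotient.mk (p := S.toSubmodule) (l - r • x) = 0 := by
      rw [Submodule.Quotient.mk_sub, Submodule.Quotient.mk_smul, hr, sub_self]
    exact (Submodule.Quotient.mk_eq_zero _).mp this
  -- lam, mu for elements of S
  have dec' : ∀ s : S, ∃ c : F, ⁅x, (s : L)⁆ - c • x ∈ S := fun s => dec _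
  choose lam hlam using dec'
  set mu : S → L := fun s => ⁅x, (s : L)⁆ - lam s • x with hmu
  have hbr : ∀ s : S, ⁅x, (s : L)⁆ = lam s • x + mu s := fun s => by
    simp [hmu]
  have hmuS : ∀ s : S, mu s ∈ S := hlam
  -- find s0 with lam ≠ 0
  obtain ⟨c0, hc0⟩ := dec l0
  set t0 : L := l0 - c0 • x with ht0
  have hl0 : l0 = c0 • x + t0 := by rw [ht0]; abel
  have hlam1 : lam ⟨s1, hs1⟩ ≠ 0 := by
    intro h0
    apply hnot
    have : ⁅l0, s1⁆ = c0 • ⁅x, s1⁆ + ⁅t0, s1⁆ := by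
      rw [hl0]; simp [add_lie, smul_lie]
    rw [this, hSb t0 s1 hc0 hs1, add_zero, hbr ⟨s1, hs1⟩, h0, zero_smul, zero_add]
    exact S.toSubmodule.smul_mem c0 (hmuS ⟨s1, hs1⟩)
  -- normalize
  set a := lam ⟨s1, hs1⟩
  set s0 : L := a⁻¹ • s1 with hs0def
  have hs0S : s0 ∈ S := S.toSubmodule.smul_mem _ hs1
  set m : L := a⁻¹ • mu ⟨s1, hs1⟩ with hmdef
  have hmS : m ∈ S := S.toSubmodule.smul_mem _ (hmuS ⟨s1, hs1⟩)
  set y : L := x + m with hydef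
  have hxs0 : ⁅x, s0⁆ = y := by
    rw [hs0def, lie_smul, hbr ⟨s1, hs1⟩, hydef, hmdef, smul_add, inv_smul_smul₀ hlam1]
  -- key: ⁅x, t⁆ = lam t • y for t ∈ S
  have key : ∀ s : S, ⁅x, (s : L)⁆ = lam s • y := by
    intro s
    have jac : ⁅x, ⁅s0, (s : L)⁆⁆ = ⁅⁅x, s0⁆, (s : L)⁆ + ⁅s0, ⁅x, (s : L)⁆⁆ :=
      leibniz_lie x s0 (s : L)
    rw [hSb s0 s hs0S s.2, lie_zero, hxs0] at jac
    have h1 : ⁅s0, ⁅x, (s : L)⁆⁆ = -(lam s • y) := by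
      rw [hbr s, lie_add, lie_smul, hSb s0 (mu s) hs0S (hmuS s), add_zero,
        ← lie_skew, hxs0, smul_neg]
    have h2 : ⁅y, (s : L)⁆ = ⁅x, (s : L)⁆ := by
      rw [hydef, add_lie, hSb m s hmS s.2, add_zero]
    rw [h1, h2] at jac
    linear_combination (norm := abel) -jac
  have hyS : y ∉ S := fun h => hxS (by
    have : x = y - m := by rw [hydef]; abel
    rw [this]; exact S.toSubmodule.sub_mem h hmS)
  have hyne : y ≠ 0 := fun h => hyS (h ▸ S.zero_mem)
  have hybr : ∀ s : S, ⁅y, (s : L)⁆ = lam s • y := by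
    intro s
    rw [hydef, add_lie, hSb m s hmS s.2, add_zero, key s]
  -- decomposition with respect to y
  have decy : ∀ l : L, ∃ c : F, l - c • y ∈ S := by
    intro l
    obtain ⟨c, hc⟩ := dec l
    refine ⟨c, ?_⟩
    have : l - c • y = (l - c • x) - c • m := by rw [hydef]; rw [smul_add]; abel
    rw [this]
    exact S.toSubmodule.sub_mem hc (S.toSubmodule.smul_mem c hmS)
  -- every bracket with y is a multiple of y
  have hbry : ∀ l : L, ∃ c : F, ⁅y, l⁆ = c • y := by
    intro l
    obtain ⟨c, hc⟩ := decy l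
    refine ⟨lam ⟨l - c • y, hc⟩, ?_⟩
    have : ⁅y, l⁆ = ⁅y, l - c • y⁆ + c • ⁅y, y⁆ := by
      rw [lie_sub, lie_smul]; abel
    rw [this, lie_self, smul_zero, add_zero, hybr ⟨l - c • y, hc⟩]
  -- the linear map ψ = ad y
  set ψ : L →ₗ[F] L :=
    { toFun := fun l => ⁅y, l⁆
      map_add' := fun l1 l2 => lie_add y l1 l2
      map_smul' := fun c l => lie_smul c y l } with hψ
  have hψ_apply : ∀ l : L, ψ l = ⁅y, l⁆ := fun l => rfl
  -- the ideal
  refine ⟨⟨LinearMap.ker ψ, ?_⟩, ⟨fun p q => ?_⟩, ?_⟩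
  · -- lie_mem
    intro l i hi
    have hi' : ⁅y, i⁆ = 0 := hi
    show ⁅y, ⁅l, i⁆⁆ = 0
    obtain ⟨c, hc⟩ := hbry l
    rw [leibniz_lie, hi', lie_zero, add_zero, hc, smul_lie, hi', smul_zero]
  · -- abelian
    apply Subtype.ext
    have hp : ⁅y, (p : L)⁆ = 0 := p.2
    have hq : ⁅y, (q : L)⁆ = 0 := q.2
    obtain ⟨c, hc⟩ := decy (p : L)
    obtain ⟨d, hd⟩ := decy (q : L)
    have hlamt : ∀ (e : F) (l : L) (h : l - e • y ∈ S), ⁅y, l⁆ = 0 → lam ⟨l - e • y, h⟩ = 0 := by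
      intro e l h h0
      have : ⁅y, l⁆ = lam ⟨l - e • y, h⟩ • y := by
        have : ⁅y, l⁆ = ⁅y, l - e • y⁆ + e • ⁅y, y⁆ := by rw [lie_sub, lie_smul]; abel
        rw [this, lie_self, smul_zero, add_zero, hybr ⟨l - e • y, h⟩]
      rw [h0] at this
      exact (smul_eq_zero.mp this.symm).resolve_right hyne
    have hc0 : lam ⟨(p : L) - c • y, hc⟩ = 0 := hlamt c p hc hp
    have hd0 : lam ⟨(q : L) - d • y, hd⟩ = 0 := hlamt d q hd hq
    have hpdec : (p : L) = c • y + ((p : L) - c • y) := by abel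
    have hqdec : (q : L) = d • y + ((q : L) - d • y) := by abel
    show ⁅(p : L), (q : L)⁆ = 0
    calc ⁅(p : L), (q : L)⁆
        = ⁅c • y + ((p : L) - c • y), d • y + ((q : L) - d • y)⁆ := by rw [← hpdec, ← hqdec]
      _ = 0 := by
          have e1 : ⁅y, (p : L) - c • y⁆ = 0 := by
            rw [hybr ⟨_, hc⟩, hc0, zero_smul]
          have e2 : ⁅y, (q : L) - d • y⁆ = 0 := by
            rw [hybr ⟨_, hd⟩, hd0, zero_smul]
          have e3 : ⁅(p : L) - c • y, (q : L) - d • y⁆ = 0 := hSb _ _ hc hd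
          have e4 : ⁅(p : L) - c • y, d • y⁆ = 0 := by
            rw [lie_smul, ← lie_skew, e1, neg_zero, smul_zero]
          have e5 : ⁅c • y, (q : L) - d • y⁆ = 0 := by
            rw [smul_lie, e2, smul_zero]
          have e6 : ⁅c • y, d • y⁆ = 0 := by
            rw [smul_lie, lie_smul, lie_self, smul_zero, smul_zero]
          rw [add_lie, lie_add, lie_add, e3, e4, e5, e6]; simp
  · -- rank
    show Module.rank F (L ⧸ LinearMap.ker ψ) = 1
    rw [ψ.quotKerEquivRange.rank_eq]
    rw [rank_eq_one_iff]
    have hψs0 : ψ s0 = y := by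
      show ⁅y, s0⁆ = y
      rw [hydef, add_lie, hSb m s0 hmS hs0S, add_zero, hxs0]
    have hymem : y ∈ LinearMap.range ψ := ⟨s0, hψs0⟩
    refine ⟨⟨y, hymem⟩, ?_, ?_⟩
    · intro h
      exact hyne (congrArg Subtype.val h)
    · rintro ⟨v, l, rfl⟩
      obtain ⟨c, hc⟩ := hbry l
      exact ⟨c, Subtype.ext (by simpa [hψ_apply] using hc.symm)⟩
end

section
/- Let L = F e₀ ⋉ V be an almost Abelian Lie algebra and e₁ ∈ e₀ + V, W ⊆ V a subspace. Then F e₁ ⊕ W is a Lie subalgebra of L if and only if ad_{e₀}(W) ⊆ W. -/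
variable {F : Type*} [Field F] {V : Type*} [AddCommGroup V] [Module F V]

/-- The almost Abelian Lie algebra `F e₀ ⋉ V` determined by the operator `T = ad_{e₀}|_V`:
the underlying vector space is `F × V`, with bracket `[(t,v),(s,w)] = (0, t • T w - s • T v)`. -/
def AA (F V : Type*) [Field F] [AddCommGroup V] [Module F V] (_T : Module.End F V) : Type _ :=
  F × V

namespace AA

variable {T : Module.End F V}

instance : AddCommGroup (AA F V T) := inferInstanceAs (AddCommGroup (F × V))
instance : Module F (AA F V T) := inferInstanceAs (Module F (F × V))

instance : LieRing (AA F V T) where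
  bracket := fun (x y : F × V) => (((0 : F), x.1 • T y.2 - y.1 • T x.2) : F × V)
  add_lie := by
    rintro ⟨a, u⟩ ⟨b, v⟩ ⟨c, w⟩
    show (((0 : F), (a + b) • T w - c • T (u + v)) : F × V)
      = (((0 : F), a • T w - c • T u) : F × V) + (((0 : F), b • T w - c • T v) : F × V)
    ext
    · simp
    · show (a + b) • T w - c • T (u + v) = (a • T w - c • T u) + (b • T w - c • T v)
      simp only [map_add, smul_add, add_smul]
      module
  lie_add := by
    rintro ⟨a, u⟩ ⟨b, v⟩ ⟨c, w⟩
    show (((0 : F), a • T (v + w) - (b + c) • T u) : F × V)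
      = (((0 : F), a • T v - b • T u) : F × V) + (((0 : F), a • T w - c • T u) : F × V)
    ext
    · simp
    · show a • T (v + w) - (b + c) • T u = (a • T v - b • T u) + (a • T w - c • T u)
      simp only [map_add, smul_add, add_smul]
      module
  lie_self := by
    rintro ⟨a, u⟩
    show (((0 : F), a • T u - a • T u) : F × V) = (0 : F × V)
    ext
    · simp
    · show a • T u - a • T u = (0 : V)
      simp
  leibniz_lie := by
    rintro ⟨a, u⟩ ⟨b, v⟩ ⟨c, w⟩
    show (((0 : F), a • T (b • T w - c • T v) - (0 : F) • T u) : F × V)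
      = (((0 : F), (0 : F) • T w - c • T (a • T v - b • T u)) : F × V)
        + (((0 : F), b • T (a • T w - c • T u) - (0 : F) • T v) : F × V)
    ext
    · simp
    · show a • T (b • T w - c • T v) - (0 : F) • T u
        = ((0 : F) • T w - c • T (a • T v - b • T u)) + (b • T (a • T w - c • T u) - (0 : F) • T v)
      simp only [map_sub, map_smul, zero_smul, smul_sub, smul_smul]
      module

instance : LieAlgebra F (AA F V T) where
  lie_smul := by
    rintro r ⟨a, u⟩ ⟨b, v⟩
    show (((0 : F), a • T (r • v) - (r • b) • T u) : F × V)
      = r • (((0 : F), a • T v - b • T u) : F × V)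
    ext
    · simp
    · show a • T (r • v) - (r • b) • T u = r • (a • T v - b • T u)
      simp only [map_smul, smul_sub, smul_smul, smul_eq_mul]
      module

/-- The distinguished element `e₀`. -/
def e0 (T : Module.End F V) : AA F V T := ((1, 0) : F × V)

/-- The inclusion of the Abelian ideal `V` into `F e₀ ⋉ V`. -/
def incl (T : Module.End F V) : V →ₗ[F] AA F V T where
  toFun v := ((0, v) : F × V)
  map_add' u v := by
    show (((0 : F), u + v) : F × V) = (((0 : F), u) : F × V) + (((0 : F), v) : F × V)
    ext <;> simp
  map_smul' r v := by
    show (((0 : F), r • v) : F × V) = r • (((0 : F), v) : F × V)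
    ext <;> simp

@[simp] lemma bracket_e0_incl (v : V) : ⁅e0 T, incl T v⁆ = incl T (T v) := by
  show (((0 : F), (1 : F) • T v - (0 : F) • T (0 : V)) : F × V) = (((0 : F), T v) : F × V)
  ext <;> simp

end AA


/-- Auxiliary constructor for elements of `AA F V T`. -/
def AAmk {F V : Type*} [Field F] [AddCommGroup V] [Module F V] (T : Module.End F V)
    (a : F) (v : V) : AA F V T := (a, v)

/-- For `e₁ = e₀ + u ∈ e₀ + V` and a subspace `W ⊆ V`, the subspace `F e₁ ⊕ W` is a Lie
subalgebra of `L = F e₀ ⋉ V` iff `ad_{e₀} W ⊆ W`. -/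
theorem stmt5 (F V : Type*) [Field F] [AddCommGroup V] [Module F V]
    (T : Module.End F V) (hT : T ≠ 0) (u : V) (W : Submodule F V) :
    (∃ S : LieSubalgebra F (AA F V T),
        S.toSubmodule = Submodule.span F {AA.e0 T + AA.incl T u} ⊔ W.map (AA.incl T)) ↔
      ∀ w ∈ W, T w ∈ W := by
    classical
  set e1 : AA F V T := AA.e0 T + AA.incl T u with he1
  have hform : ∀ (a : F) (w : V), a • e1 + AA.incl T w = AAmk T a (a • u + w) := by
    intro a w
    show a • (((1, 0) : F × V) + ((0, u) : F × V)) + ((0, w) : F × V) = ((a, a • u + w) : F × V)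
    ext <;> simp
  have hmem : ∀ x : AA F V T,
      x ∈ (Submodule.span F {e1} ⊔ W.map (AA.incl T)) ↔
      ∃ a : F, ∃ w ∈ W, x = AAmk T a (a • u + w) := by
    intro x
    rw [Submodule.mem_sup]
    constructor
    · rintro ⟨p, hp, q, hq, rfl⟩
      rw [Submodule.mem_span_singleton] at hp
      obtain ⟨a, rfl⟩ := hp
      obtain ⟨w, hw, rfl⟩ := hq
      exact ⟨a, w, hw, (hform a w)⟩
    · rintro ⟨a, w, hw, rfl⟩
      exact ⟨a • e1, Submodule.smul_mem _ _ (Submodule.mem_span_singleton_self _), _,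
        ⟨w, hw, rfl⟩, hform a w⟩
  have hbr : ∀ (a b : F) (w w' : V),
      ⁅AAmk T a (a • u + w), AAmk T b (b • u + w')⁆
        = AA.incl T (a • T w' - b • T w) := by
    intro a b w w'
    show (((0 : F), a • T (b • u + w') - b • T (a • u + w)) : F × V)
      = (((0 : F), a • T w' - b • T w) : F × V)
    ext
    · rfl
    · show a • T (b • u + w') - b • T (a • u + w) = a • T w' - b • T w
      simp only [map_add, map_smul, smul_add, smul_smul]
      module
  constructor
  · rintro ⟨S, hS⟩ w hw
    have h1 : e1 ∈ S := by
      have : e1 ∈ S.toSubmodule := by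
        rw [hS]; exact Submodule.mem_sup_left (Submodule.mem_span_singleton_self _)
      exact this
    have h2 : AA.incl T w ∈ S := by
      have : AA.incl T w ∈ S.toSubmodule := by
        rw [hS]; exact Submodule.mem_sup_right ⟨w, hw, rfl⟩
      exact this
    have hb : ⁅e1, AA.incl T w⁆ ∈ S.toSubmodule := S.lie_mem h1 h2
    have hcalc : ⁅e1, AA.incl T w⁆ = AA.incl T (T w) := by
      show (((0 : F), ((1 : F) + 0) • T w - (0 : F) • T ((0 : V) + u)) : F × V)
        = (((0 : F), T w) : F × V)
      ext <;> simp
    rw [hS, hcalc, hmem] at hb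
    obtain ⟨a, w', hw', heq⟩ := hb
    have heq' : ((0, T w) : F × V) = ((a, a • u + w') : F × V) := heq
    obtain ⟨h1', h2'⟩ := Prod.mk.injEq .. ▸ heq'
    rw [← h1', zero_smul, zero_add] at h2'
    rw [h2']; exact hw'
  · intro h
    refine ⟨{ toSubmodule := Submodule.span F {e1} ⊔ W.map (AA.incl T), lie_mem' := ?_ }, rfl⟩
    intro x y hx hy
    obtain ⟨a, w, hw, rfl⟩ := (hmem x).mp hx
    obtain ⟨b, w', hw', rfl⟩ := (hmem y).mp hy
    show ⁅AAmk T a (a • u + w), AAmk T b (b • u + w')⁆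
      ∈ Submodule.span F {e1} ⊔ W.map (AA.incl T)
    rw [hbr]
    exact Submodule.mem_sup_right ⟨a • T w' - b • T w,
      W.sub_mem (W.smul_mem a (h w' hw')) (W.smul_mem b (h w hw)), rfl⟩
end

section
/- Let L = F e₀ ⋉ V be an almost Abelian Lie algebra, e₁ ∈ e₀ + V, and W ⊆ V a subspace. Then F e₁ ⊕ W is an ideal of L if and only if ad_{e₀}(V) ⊆ W. -/
variable {F : Type*} [Field F] {V : Type*} [AddCommGroup V] [Module F V]

/-- For `e₁ = e₀ + u ∈ e₀ + V` and a subspace `W ⊆ V`, the subspace `F e₁ ⊕ W` is an ideal of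
`L = F e₀ ⋉ V` iff `ad_{e₀} V ⊆ W`. -/
theorem stmt6 (F V : Type*) [Field F] [AddCommGroup V] [Module F V]
    (T : Module.End F V) (hT : T ≠ 0) (u : V) (W : Submodule F V) :
    (∃ I : LieIdeal F (AA F V T),
        I.toSubmodule = Submodule.span F {AA.e0 T + AA.incl T u} ⊔ W.map (AA.incl T)) ↔
      ∀ v : V, T v ∈ W := by
  constructor
  · rintro ⟨I, hI⟩ v
    have hx : AA.e0 T + AA.incl T u ∈ I := by
      rw [← LieSubmodule.mem_toSubmodule, hI]
      exact Submodule.mem_sup_left (Submodule.mem_span_singleton_self _)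
    have hb : ⁅AA.incl T v, AA.e0 T + AA.incl T u⁆ ∈ I := I.lie_mem hx
    have hbr : ⁅AA.incl T v, AA.e0 T + AA.incl T u⁆ = AA.incl T (-(T v)) := by
      show (((0 : F), (0 : F) • T ((0 : V) + u) - ((1 : F) + 0) • T v) : F × V)
        = (((0 : F), -(T v)) : F × V)
      ext <;> simp
    rw [hbr, ← LieSubmodule.mem_toSubmodule, hI] at hb
    obtain ⟨y1, hy1, y2, hy2, hsum⟩ := Submodule.mem_sup.1 hb
    obtain ⟨c, rfl⟩ := Submodule.mem_span_singleton.1 hy1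
    obtain ⟨w, hwW, rfl⟩ := hy2
    have h1 := congrArg (Prod.fst (α := F) (β := V)) hsum
    have h2 := congrArg (Prod.snd (α := F) (β := V)) hsum
    have hc : c = 0 := by
      have : c * ((1 : F) + 0) + 0 = 0 := h1
      simpa using this
    have hw : c • ((0 : V) + u) + w = -(T v) := h2
    rw [hc] at hw
    simp only [zero_smul, zero_add] at hw
    have : T v = -w := by rw [hw]; simp
    rw [this]
    exact W.neg_mem hwW
  · intro h
    refine ⟨⟨Submodule.span F {AA.e0 T + AA.incl T u} ⊔ W.map (AA.incl T), ?_⟩, rfl⟩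
    rintro ⟨a, p⟩ ⟨b, q⟩ _
    apply Submodule.mem_sup_right
    exact ⟨a • T q - b • T p,
      W.sub_mem (W.smul_mem _ (h _)) (W.smul_mem _ (h _)), rfl⟩
end

section
/- If an almost Abelian Lie algebra L decomposes as a direct sum of Lie ideals L = L₁ ⊕ L₂, then one of L₁, L₂ is almost Abelian and the other is Abelian. -/
section Aux

variable {F L : Type*} [Field F] [LieRing L] [LieAlgebra F L]

lemma aux_abelian_coe (P : LieIdeal F L) (h : IsLieAbelian P) {x y : L}
    (hx : x ∈ P) (hy : y ∈ P) : ⁅x, y⁆ = 0 := by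
  have h0 : ⁅(⟨x, hx⟩ : P), (⟨y, hy⟩ : P)⁆ = 0 := trivial_lie_zero _ _ _ _
  exact congrArg Subtype.val h0

lemma aux_abelian_of_le (P A : LieIdeal F L) (hA : IsLieAbelian A)
    (h : ∀ x ∈ P, x ∈ A) : IsLieAbelian P :=
  ⟨fun x y => Subtype.ext (aux_abelian_coe A hA (h _ x.2) (h _ y.2))⟩

lemma aux_main (A P Q : LieIdeal F L) (hAab : IsLieAbelian A)
    (hrank : Module.rank F (L ⧸ A.toSubmodule) = 1)
    (hd : ∀ z : L, z ∈ P → z ∈ Q → z = 0)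
    (y : L) (hyP : y ∈ P) (hyA : y ∉ A) :
    IsLieAbelian Q ∧ IsLieAbelian (LieIdeal.comap P.incl A) ∧
      Module.rank F (↥P ⧸ (LieIdeal.comap P.incl A).toSubmodule) = 1 := by
  obtain ⟨v₀, hv₀⟩ := rank_le_one_iff.mp hrank.le
  have hy0 : A.toSubmodule.mkQ y ≠ 0 := by
    simpa [Submodule.Quotient.mk_eq_zero] using hyA
  obtain ⟨c, hc⟩ := hv₀ (A.toSubmodule.mkQ y)
  have hcne : c ≠ 0 := by rintro rfl; simp at hc; exact hy0 hc.symm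
  have hdec : ∀ l : L, ∃ r : F, l - r • y ∈ A := by
    intro l
    obtain ⟨r, hr⟩ := hv₀ (A.toSubmodule.mkQ l)
    refine ⟨r * c⁻¹, ?_⟩
    have h0 : A.toSubmodule.mkQ (l - (r * c⁻¹) • y) = 0 := by
      rw [map_sub, map_smul, ← hc, ← hr, smul_smul, mul_assoc,
        inv_mul_cancel₀ hcne, mul_one, sub_self]
    rwa [Submodule.mkQ_apply, Submodule.Quotient.mk_eq_zero] at h0
  have hQab : IsLieAbelian Q := by
    constructor
    intro u v
    apply Subtype.ext
    show ⁅(u : L), (v : L)⁆ = 0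
    obtain ⟨r, hr⟩ := hdec (u : L)
    obtain ⟨s, hs⟩ := hdec (v : L)
    have e1 : (u : L) = r • y + ((u : L) - r • y) := by abel
    have e2 : (v : L) = s • y + ((v : L) - s • y) := by abel
    have hab : ⁅(u : L) - r • y, (v : L) - s • y⁆ = 0 := aux_abelian_coe A hAab hr hs
    have e : ⁅(u : L), (v : L)⁆
        = r • ⁅y, (v : L)⁆ + s • ⁅(u : L), y⁆ := by
      conv_lhs => rw [e1, e2]
      conv_rhs => rw [e1, e2]
      simp only [add_lie, lie_add, smul_lie, lie_smul, lie_self, hab,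
        smul_zero, zero_add, add_zero, smul_add]
      abel
    have hmemP : ⁅(u : L), (v : L)⁆ ∈ P := by
      rw [e]
      refine add_mem (P.toSubmodule.smul_mem r ?_) (P.toSubmodule.smul_mem s ?_)
      · rw [← lie_skew]
        exact neg_mem (P.lie_mem hyP)
      · exact P.lie_mem hyP
    have hmemQ : ⁅(u : L), (v : L)⁆ ∈ Q := Q.lie_mem v.2
    exact hd _ hmemP hmemQ
  refine ⟨hQab, ?_, ?_⟩
  · constructor
    intro u v
    have h1 : (↑(↑u : ↥P) : L) ∈ A := by
      have := u.2
      rw [LieIdeal.mem_comap, LieIdeal.incl_apply] at this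
      exact this
    have h2 : (↑(↑v : ↥P) : L) ∈ A := by
      have := v.2
      rw [LieIdeal.mem_comap, LieIdeal.incl_apply] at this
      exact this
    exact Subtype.ext (Subtype.ext (aux_abelian_coe A hAab h1 h2))
  · let f : ↥P →ₗ[F] L ⧸ A.toSubmodule := A.toSubmodule.mkQ ∘ₗ P.toSubmodule.subtype
    have hker : LinearMap.ker f = (LieIdeal.comap P.incl A).toSubmodule := by
      ext z
      simp [f, LieIdeal.mem_comap, LieIdeal.incl_apply, Submodule.Quotient.mk_eq_zero]
    have hsurj : Function.Surjective f := by
      intro z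
      obtain ⟨r, hr⟩ := hv₀ z
      refine ⟨⟨(r * c⁻¹) • y, P.toSubmodule.smul_mem _ hyP⟩, ?_⟩
      show A.toSubmodule.mkQ ((r * c⁻¹) • y) = z
      rw [map_smul, ← hc, smul_smul, mul_assoc, inv_mul_cancel₀ hcne, mul_one, hr]
    calc Module.rank F (↥P ⧸ (LieIdeal.comap P.incl A).toSubmodule)
        = Module.rank F (↥P ⧸ LinearMap.ker f) := by rw [hker]
      _ = Module.rank F (L ⧸ A.toSubmodule) :=
          (f.quotKerEquivOfSurjective hsurj).rank_eq
      _ = 1 := hrank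

end Aux

/-- If an almost Abelian Lie algebra decomposes as the direct sum of two ideals, then one summand
is almost Abelian and the other is Abelian. -/
theorem stmt7 (F L : Type*) [Field F] [LieRing L] [LieAlgebra F L]
    (hL : IsAlmostAbelian F L) (I J : LieIdeal F L) (hdisj : I ⊓ J = ⊥) (hcodisj : I ⊔ J = ⊤) :
    (IsAlmostAbelian F I ∧ IsLieAbelian J) ∨ (IsAlmostAbelian F J ∧ IsLieAbelian I) := by
  obtain ⟨hnab, A, hAab, hrank⟩ := hL
  have hd : ∀ z : L, z ∈ I → z ∈ J → z = 0 := by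
    intro z hzI hzJ
    have : z ∈ I ⊓ J := (LieSubmodule.mem_inf _ _ _).mpr ⟨hzI, hzJ⟩
    rw [hdisj] at this
    simpa using this
  have hd' : ∀ z : L, z ∈ J → z ∈ I → z = 0 := fun z h1 h2 => hd z h2 h1
  have hIJ : ∀ x ∈ I, ∀ y ∈ J, ⁅x, y⁆ = (0 : L) := by
    intro x hx y hy
    refine hd _ ?_ (J.lie_mem hy)
    rw [← lie_skew]
    exact neg_mem (I.lie_mem hx)
  have habL : IsLieAbelian I → IsLieAbelian J → False := by
    intro h1 h2
    apply hnab
    constructor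
    intro x y
    have hx : x ∈ I ⊔ J := by rw [hcodisj]; trivial
    have hy : y ∈ I ⊔ J := by rw [hcodisj]; trivial
    obtain ⟨a, ha, b, hb, hab⟩ := (LieSubmodule.mem_sup _ _ _).mp hx
    obtain ⟨a', ha', b', hb', hab'⟩ := (LieSubmodule.mem_sup _ _ _).mp hy
    rw [← hab, ← hab']
    have t1 : ⁅a, a'⁆ = (0 : L) := aux_abelian_coe I h1 ha ha'
    have t2 : ⁅a, b'⁆ = (0 : L) := hIJ a ha b' hb'
    have t3 : ⁅b, a'⁆ = (0 : L) := by
      rw [← lie_skew, hIJ a' ha' b hb, neg_zero]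
    have t4 : ⁅b, b'⁆ = (0 : L) := aux_abelian_coe J h2 hb hb'
    rw [add_lie, lie_add, lie_add, t1, t2, t3, t4]
    simp
  by_cases hIA : ∀ x ∈ I, x ∈ A
  · have hIab : IsLieAbelian I := aux_abelian_of_le I A hAab hIA
    by_cases hJA : ∀ x ∈ J, x ∈ A
    · exact (habL hIab (aux_abelian_of_le J A hAab hJA)).elim
    · push_neg at hJA
      obtain ⟨y, hyJ, hyA⟩ := hJA
      obtain ⟨_, hK, hr⟩ := aux_main A J I hAab hrank hd' y hyJ hyA
      exact Or.inr ⟨⟨fun h => habL hIab h, _, hK, hr⟩, hIab⟩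
  · push_neg at hIA
    obtain ⟨x, hxI, hxA⟩ := hIA
    obtain ⟨hJab, hK, hr⟩ := aux_main A I J hAab hrank hd x hxI hxA
    exact Or.inl ⟨⟨fun h => habL h hJab, _, hK, hr⟩, hJab⟩
end

section
/- Every almost Abelian Lie algebra L decomposes as L = L₀ ⊕ W where L₀ is an indecomposable almost Abelian Lie subalgebra and W is an Abelian ideal contained in the center; moreover any two such decompositions yield isomorphic L₀'s and isomorphic W's. -/
/-- A Lie algebra is indecomposable if it is not the direct sum of two nonzero ideals. -/
def LieIndecomposable (F L : Type*) [Field F] [LieRing L] [LieAlgebra F L] : Prop :=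
  ¬∃ (I J : LieIdeal F L), I ≠ ⊥ ∧ J ≠ ⊥ ∧ I ⊓ J = ⊥ ∧ I ⊔ J = ⊤

section Aux
variable {F : Type*} [Field F]

/-- Complement of `Q` within `T` containing a given `P`. -/
lemma aux_compl_within {M : Type*} [AddCommGroup M] [Module F M] (T P Q : Submodule F M)
    (hP : P ≤ T) (hQ : Q ≤ T) (hPQ : P ⊓ Q = ⊥) :
    ∃ S : Submodule F M, P ≤ S ∧ S ≤ T ∧ S ⊓ Q = ⊥ ∧ S ⊔ Q = T := by
  classical
  set ι := T.subtype with hι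
  set P' := P.comap ι with hP'
  set Q' := Q.comap ι with hQ'
  obtain ⟨C, hC⟩ := Submodule.exists_isCompl (P' ⊔ Q')
  have hmapP : P'.map ι = P := by
    rw [hP', hι, Submodule.map_comap_subtype, inf_eq_right.mpr hP]
  have hmapQ : Q'.map ι = Q := by
    rw [hQ', hι, Submodule.map_comap_subtype, inf_eq_right.mpr hQ]
  have hP'Q' : P' ⊓ Q' = ⊥ := by
    rw [hP', hQ', ← Submodule.comap_inf, hPQ, Submodule.comap_bot, hι, Submodule.ker_subtype]
  have hS'Q' : (P' ⊔ C) ⊓ Q' = ⊥ := by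
    rw [eq_bot_iff]
    intro x hx
    rw [Submodule.mem_inf] at hx
    obtain ⟨hx1, hx2⟩ := hx
    obtain ⟨p, hp, c, hc, hpc⟩ := Submodule.mem_sup.mp hx1
    have hcm : c ∈ (P' ⊔ Q') ⊓ C := by
      refine Submodule.mem_inf.mpr ⟨?_, hc⟩
      have : c = x - p := by rw [← hpc]; abel
      rw [this]
      exact Submodule.sub_mem _ (Submodule.mem_sup_right hx2) (Submodule.mem_sup_left hp)
    rw [hC.inf_eq_bot, Submodule.mem_bot] at hcm
    have hxp : x = p := by rw [← hpc, hcm, add_zero]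
    have : x ∈ P' ⊓ Q' := Submodule.mem_inf.mpr ⟨hxp ▸ hp, hx2⟩
    rw [hP'Q'] at this
    exact this
  refine ⟨(P' ⊔ C).map ι, ?_, ?_, ?_, ?_⟩
  · rw [← hmapP]; exact Submodule.map_mono le_sup_left
  · exact Submodule.map_subtype_le _ _
  · rw [← hmapQ, ← Submodule.map_inf _ (Submodule.injective_subtype T), hS'Q',
      Submodule.map_bot]
  · rw [← hmapQ, ← Submodule.map_sup, sup_right_comm, hC.sup_eq_top, Submodule.map_top,
      Submodule.range_subtype]

lemma aux_equiv_of_compl {M : Type*} [AddCommGroup M] [Module F M] (T Q X Y : Submodule F M)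
    (hQ : Q ≤ T) (hX : X ≤ T) (hY : Y ≤ T) (hX1 : X ⊓ Q = ⊥) (hX2 : X ⊔ Q = T)
    (hY1 : Y ⊓ Q = ⊥) (hY2 : Y ⊔ Q = T) : Nonempty (↥X ≃ₗ[F] ↥Y) := by
  have key : ∀ Z : Submodule F M, Z ≤ T → Z ⊓ Q = ⊥ → Z ⊔ Q = T →
      IsCompl (Q.comap T.subtype) (Z.comap T.subtype) := by
    intro Z hZ h1 h2
    constructor
    · rw [disjoint_iff, ← Submodule.comap_inf, inf_comm, h1, Submodule.comap_bot,
        Submodule.ker_subtype]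
    · rw [codisjoint_iff, ← (Submodule.map_injective_of_injective
        (Submodule.injective_subtype T)).eq_iff, Submodule.map_sup,
        Submodule.map_comap_subtype, Submodule.map_comap_subtype, Submodule.map_top,
        Submodule.range_subtype, inf_eq_right.mpr hQ, inf_eq_right.mpr hZ, sup_comm, h2]
  exact ⟨(Submodule.comapSubtypeEquivOfLe hX).symm ≪≫ₗ
    (Submodule.quotientEquivOfIsCompl _ _ (key X hX hX1 hX2)).symm ≪≫ₗ
    (Submodule.quotientEquivOfIsCompl _ _ (key Y hY hY1 hY2)) ≪≫ₗ
    (Submodule.comapSubtypeEquivOfLe hY)⟩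

end Aux

section Aux2
variable {F : Type*} {L : Type*} [Field F] [LieRing L] [LieAlgebra F L]

lemma aux_skew (a b : L) : ⁅a, b⁆ = -⁅b, a⁆ := by rw [← lie_skew a b]

/-- Bracket expansion in an "almost abelian" situation. -/
lemma aux_lie_eq (e : L) (V : Submodule F L)
    (hab : ∀ a ∈ V, ∀ b ∈ V, ⁅a, b⁆ = (0 : L))
    {x y : L} {cx cy : F} (hx : x - cx • e ∈ V) (hy : y - cy • e ∈ V) :
    ⁅x, y⁆ = cx • ⁅e, y - cy • e⁆ - cy • ⁅e, x - cx • e⁆ := by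
  have hxx : x = (x - cx • e) + cx • e := by abel
  have hyy : y = (y - cy • e) + cy • e := by abel
  calc ⁅x, y⁆ = ⁅(x - cx • e) + cx • e, (y - cy • e) + cy • e⁆ := by rw [← hxx, ← hyy]
    _ = cx • ⁅e, y - cy • e⁆ - cy • ⁅e, x - cx • e⁆ := by
        rw [add_lie, lie_add, lie_add, hab _ hx _ hy, lie_smul, lie_smul, smul_lie, smul_lie,
          lie_self, aux_skew (x - cx • e) e]
        module

/-- Extract a working setup from an almost Abelian Lie algebra. -/
lemma aux_setup (h : IsAlmostAbelian F L) :
    ∃ (e : L) (V : Submodule F L),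
      (∀ a ∈ V, ∀ b ∈ V, ⁅a, b⁆ = (0 : L)) ∧
      (∀ (x : L), ∀ v ∈ V, ⁅x, v⁆ ∈ V) ∧
      e ∉ V ∧ (∀ x : L, ∃ c : F, x - c • e ∈ V) ∧
      (∃ v ∈ V, ⁅e, v⁆ ≠ (0 : L)) := by
  obtain ⟨hna, I, habI, hrk⟩ := h
  set V := I.toSubmodule with hV
  have hab : ∀ a ∈ V, ∀ b ∈ V, ⁅a, b⁆ = (0 : L) := by
    intro a ha b hb
    have h1 : (⁅(⟨a, ha⟩ : I), (⟨b, hb⟩ : I)⁆ : I) = 0 := habI.trivial _ _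
    exact congrArg Subtype.val h1
  have hideal : ∀ (x : L), ∀ v ∈ V, ⁅x, v⁆ ∈ V := fun x v hv => I.lie_mem hv
  obtain ⟨q₀, hq0, hq⟩ := rank_eq_one_iff.mp hrk
  obtain ⟨e, he⟩ := Submodule.Quotient.mk_surjective V q₀
  have heV : e ∉ V := by
    intro hmem
    exact hq0 (by rw [← he, Submodule.Quotient.mk_eq_zero V]; exact hmem)
  have hsurj : ∀ x : L, ∃ c : F, x - c • e ∈ V := by
    intro x
    obtain ⟨c, hc⟩ := hq (Submodule.Quotient.mk x)
    refine ⟨c, ?_⟩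
    rw [← Submodule.Quotient.mk_eq_zero V, Submodule.Quotient.mk_sub,
      Submodule.Quotient.mk_smul, he, hc, sub_self]
  refine ⟨e, V, hab, hideal, heV, hsurj, ?_⟩
  by_contra hcon
  push_neg at hcon
  apply hna
  constructor
  intro x y
  obtain ⟨cx, hx⟩ := hsurj x
  obtain ⟨cy, hy⟩ := hsurj y
  rw [aux_lie_eq e V hab hx hy, hcon _ hx, hcon _ hy, smul_zero, smul_zero, sub_zero]

end Aux2

section Aux3
variable {F : Type*} {L : Type*} [Field F] [LieRing L] [LieAlgebra F L]

lemma aux_indecomp (e : L) (V : Submodule F L)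
    (hab : ∀ a ∈ V, ∀ b ∈ V, ⁅a, b⁆ = (0 : L))
    (heV : e ∉ V)
    (hsurj : ∀ x : L, ∃ c : F, x - c • e ∈ V)
    (hD : ∃ v ∈ V, ⁅e, v⁆ ≠ (0 : L))
    (hker : ∀ v ∈ V, ⁅e, v⁆ = (0 : L) → ∃ x : L, ⁅e, x⁆ = v) :
    LieIndecomposable F L := by
  rintro ⟨I, J, hI, hJ, hIJ, hIJT⟩
  -- brackets between the two ideals vanish
  have hIJ0 : ∀ i ∈ I, ∀ j ∈ J, ⁅i, j⁆ = (0 : L) := by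
    intro i hi j hj
    have h1 : ⁅i, j⁆ ∈ J := J.lie_mem hj
    have h2 : ⁅i, j⁆ ∈ I := by
      rw [aux_skew]
      exact I.neg_mem (I.lie_mem hi)
    have : ⁅i, j⁆ ∈ I ⊓ J := (LieSubmodule.mem_inf _ _ _).mpr ⟨h2, h1⟩
    rw [hIJ, LieSubmodule.mem_bot] at this
    exact this
  have hsupT : I.toSubmodule ⊔ J.toSubmodule = ⊤ := by
    rw [← LieSubmodule.sup_toSubmodule, hIJT, LieSubmodule.top_toSubmodule]
  have hinfB : ∀ x : L, x ∈ I → x ∈ J → x = 0 := by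
    intro x h1 h2
    have : x ∈ I ⊓ J := (LieSubmodule.mem_inf _ _ _).mpr ⟨h1, h2⟩
    rw [hIJ, LieSubmodule.mem_bot] at this
    exact this
  -- no nonzero ideal of the pair lies inside V
  have key : ∀ I' J' : LieIdeal F L, J' ≠ ⊥ → (∀ i ∈ I', ∀ j ∈ J', ⁅i, j⁆ = (0 : L)) →
      I'.toSubmodule ⊔ J'.toSubmodule = ⊤ → (∀ x : L, x ∈ I' → x ∈ J' → x = 0) →
      ∃ j ∈ J', j ∉ V := by
    intro I' J' hJ' h0 hsup hinf
    by_contra hcontra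
    push_neg at hcontra
    -- J' is central
    have hcent : ∀ j ∈ J', ∀ x : L, ⁅x, j⁆ = (0 : L) := by
      intro j hj x
      have hxm : x ∈ I'.toSubmodule ⊔ J'.toSubmodule := by rw [hsup]; trivial
      obtain ⟨i, hi, j', hj', hij⟩ := Submodule.mem_sup.mp hxm
      rw [← hij, add_lie, h0 i hi j hj, hab j' (hcontra j' hj') j (hcontra j hj), add_zero]
    apply hJ'
    rw [LieSubmodule.eq_bot_iff]
    intro j hj
    obtain ⟨x, hx⟩ := hker j (hcontra j hj) (hcent j hj e)
    have hem : e ∈ I'.toSubmodule ⊔ J'.toSubmodule := by rw [hsup]; trivial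
    obtain ⟨i₀, hi₀, j₀, hj₀, hij₀⟩ := Submodule.mem_sup.mp hem
    have hj0x : ⁅j₀, x⁆ = 0 := by rw [aux_skew, hcent j₀ hj₀ x, neg_zero]
    have hjI : j ∈ I' := by
      have : j = ⁅i₀, x⁆ := by
        rw [← hx, ← hij₀, add_lie, hj0x, add_zero]
      rw [this, aux_skew]
      exact I'.neg_mem (I'.lie_mem hi₀)
    exact hinf j hjI hj
  have hinf' : ∀ x : L, x ∈ J → x ∈ I → x = 0 := fun x h1 h2 => hinfB x h2 h1
  have h0' : ∀ i ∈ J, ∀ j ∈ I, ⁅i, j⁆ = (0 : L) := by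
    intro i hi j hj; rw [aux_skew, hIJ0 j hj i hi, neg_zero]
  obtain ⟨jel, hjel, hjelV⟩ := key I J hJ hIJ0 hsupT hinfB
  obtain ⟨iel, hiel, hielV⟩ := key J I hI h0' (by rw [sup_comm]; exact hsupT) hinf'
  -- normalize elements: find u ∈ V with e + u in the ideal
  have hnorm : ∀ (N : LieIdeal F L) (x : L), x ∈ N → x ∉ V → ∃ u ∈ V, e + u ∈ N := by
    intro N x hx hxV
    obtain ⟨c, hc⟩ := hsurj x
    have hc0 : c ≠ 0 := by
      intro h
      apply hxV
      simpa [h] using hc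
    refine ⟨c⁻¹ • x - e, ?_, ?_⟩
    · have : c⁻¹ • x - e = c⁻¹ • (x - c • e) := by
        rw [smul_sub, smul_smul, inv_mul_cancel₀ hc0, one_smul]
      rw [this]
      exact Submodule.smul_mem _ _ hc
    · have : e + (c⁻¹ • x - e) = c⁻¹ • x := by abel
      rw [this]
      exact N.smul_mem _ hx
  obtain ⟨uI, huIV, huI⟩ := hnorm I iel hiel hielV
  obtain ⟨uJ, huJV, huJ⟩ := hnorm J jel hjel hjelV
  have hDIJ : ⁅e, uI⁆ = ⁅e, uJ⁆ := by
    have h0 : (0 : L) = ⁅e + uI, e + uJ⁆ := (hIJ0 _ huI _ huJ).symm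
    rw [add_lie, lie_add, lie_add, lie_self, hab uI huIV uJ huJV, aux_skew uI e] at h0
    have : ⁅e, uJ⁆ - ⁅e, uI⁆ = 0 := by rw [h0]; abel
    have h2 := sub_eq_zero.mp this
    exact h2.symm
  have hzero : ∀ x : L, ⁅e + uI, x⁆ = 0 := by
    intro x
    have hxm : x ∈ I.toSubmodule ⊔ J.toSubmodule := by rw [hsupT]; trivial
    obtain ⟨i', hi', j', hj', hij'⟩ := Submodule.mem_sup.mp hxm
    have hA : ⁅e + uI, x⁆ = ⁅e + uI, i'⁆ := by
      rw [← hij', lie_add, hIJ0 _ huI _ hj', add_zero]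
    have hB : ⁅e + uJ, x⁆ = ⁅e + uJ, j'⁆ := by
      rw [← hij', lie_add, aux_skew _ i', hIJ0 _ hi' _ huJ, neg_zero, zero_add]
    have hAmem : ⁅e + uI, x⁆ ∈ I := by
      rw [hA, aux_skew]
      exact I.neg_mem (I.lie_mem huI)
    have hBmem : ⁅e + uJ, x⁆ ∈ J := by
      rw [hB, aux_skew]
      exact J.neg_mem (J.lie_mem huJ)
    have hdiff : ⁅e + uI, x⁆ - ⁅e + uJ, x⁆ = 0 := by
      have h1 : ⁅e + uI, x⁆ - ⁅e + uJ, x⁆ = ⁅uI - uJ, x⁆ := by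
        rw [← sub_lie]
        congr 1
        abel
      obtain ⟨c, hc⟩ := hsurj x
      have huIJ : uI - uJ - (0 : F) • e ∈ V := by
        simpa using Submodule.sub_mem _ huIV huJV
      rw [h1, aux_lie_eq e V hab huIJ hc]
      have : ⁅e, uI - uJ - (0 : F) • e⁆ = 0 := by
        rw [zero_smul, sub_zero, lie_sub, hDIJ, sub_self]
      rw [this, smul_zero, zero_smul, zero_sub, neg_zero]
    have heq : ⁅e + uI, x⁆ = ⁅e + uJ, x⁆ := sub_eq_zero.mp hdiff
    exact hinfB _ hAmem (heq ▸ hBmem)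
  have h1 : ⁅e, uI⁆ = 0 := by
    have h2 := hzero e
    rw [add_lie, lie_self, zero_add, aux_skew uI e] at h2
    rw [← neg_eq_zero]
    exact h2
  obtain ⟨v, hv, hvne⟩ := hD
  apply hvne
  have h3 := hzero v
  rw [add_lie, hab uI huIV v hv, add_zero] at h3
  exact h3

end Aux3

section Aux4
variable {F : Type*} {L : Type*} [Field F] [LieRing L] [LieAlgebra F L]

lemma aux_center_le_range (e : L) (V : Submodule F L)
    (hab : ∀ a ∈ V, ∀ b ∈ V, ⁅a, b⁆ = (0 : L))
    (hideal : ∀ (x : L), ∀ v ∈ V, ⁅x, v⁆ ∈ V)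
    (heV : e ∉ V)
    (hsurj : ∀ x : L, ∃ c : F, x - c • e ∈ V)
    (hD : ∃ v ∈ V, ⁅e, v⁆ ≠ (0 : L))
    (hind : LieIndecomposable F L)
    (z : L) (hz : ∀ x : L, ⁅x, z⁆ = (0 : L)) : ∃ x : L, ⁅e, x⁆ = z := by
  by_contra hcon
  push_neg at hcon
  set D := LieAlgebra.ad F L e with hDdef
  have hDapp : ∀ x : L, D x = ⁅e, x⁆ := fun x => by rw [hDdef, LieAlgebra.ad_apply]
  -- z ∈ V
  have hzV : z ∈ V := by
    obtain ⟨c, hc⟩ := hsurj z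
    have hc0 : c = 0 := by
      by_contra hc0
      obtain ⟨v, hv, hvne⟩ := hD
      apply hvne
      have h1 : ⁅z, v⁆ = 0 := by rw [aux_skew, hz v, neg_zero]
      have h2 : v - (0 : F) • e ∈ V := by simpa using hv
      rw [aux_lie_eq e V hab hc h2] at h1
      simp only [zero_smul, sub_zero, smul_zero] at h1
      rcases smul_eq_zero.mp h1 with h | h
      · exact absurd h hc0
      · simpa using h
    rw [hc0] at hc
    simpa using hc
  have hz0 : z ≠ 0 := fun h => hcon 0 (by rw [lie_zero, h])
  -- every bracket lies in the range of D
  have hbr_mem : ∀ x y : L, ⁅x, y⁆ ∈ LinearMap.range D := by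
    intro x y
    obtain ⟨cx, hx⟩ := hsurj x
    obtain ⟨cy, hy⟩ := hsurj y
    rw [aux_lie_eq e V hab hx hy]
    exact Submodule.sub_mem _
      (Submodule.smul_mem _ _ ⟨_, (hDapp _)⟩) (Submodule.smul_mem _ _ ⟨_, (hDapp _)⟩)
  set Z : Submodule F L := Submodule.span F ({z} : Set L) with hZdef
  set P : Submodule F L := Submodule.span F ({e} : Set L) ⊔ LinearMap.range D with hPdef
  have hzP : z ∉ P := by
    intro hm
    obtain ⟨s, hs, r, hr, hsr⟩ := Submodule.mem_sup.mp hm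
    obtain ⟨c, hc⟩ := Submodule.mem_span_singleton.mp hs
    obtain ⟨w, hw⟩ := hr
    have hrV : r ∈ V := by
      obtain ⟨cw, hcw⟩ := hsurj w
      have : D w = ⁅e, w - cw • e⁆ := by
        rw [hDapp, lie_sub, lie_smul, lie_self, smul_zero, sub_zero]
      rw [← hw, this]
      exact hideal e _ hcw
    have hce : c • e = z - r := by rw [← hsr, ← hc]; abel
    have hc0 : c = 0 := by
      by_contra hc0
      apply heV
      have : e = c⁻¹ • (c • e) := by rw [smul_smul, inv_mul_cancel₀ hc0, one_smul]
      rw [this, hce]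
      exact Submodule.smul_mem _ _ (Submodule.sub_mem _ hzV hrV)
    apply hcon w
    rw [← hDapp, hw]
    rw [hc0, zero_smul] at hce
    have := sub_eq_zero.mp hce.symm
    exact this.symm
  have hPz : P ⊓ Z = ⊥ := by
    rw [eq_bot_iff]
    intro x hx
    rw [Submodule.mem_inf] at hx
    obtain ⟨hx1, hx2⟩ := hx
    obtain ⟨c, hc⟩ := Submodule.mem_span_singleton.mp (hZdef ▸ hx2)
    have hc0 : c = 0 := by
      by_contra hc0
      apply hzP
      have : z = c⁻¹ • x := by rw [← hc, smul_smul, inv_mul_cancel₀ hc0, one_smul]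
      rw [this]
      exact Submodule.smul_mem _ _ hx1
    rw [Submodule.mem_bot, ← hc, hc0, zero_smul]
  obtain ⟨S, hPS, _, hSz, hSzT⟩ := aux_compl_within ⊤ P Z le_top le_top hPz
  apply hind
  refine ⟨⟨S, ?_⟩, ⟨Z, ?_⟩, ?_, ?_, ?_, ?_⟩
  · intro x m _
    exact hPS (Submodule.mem_sup_right (hbr_mem x m))
  · intro x m hm
    obtain ⟨c, hc⟩ := Submodule.mem_span_singleton.mp hm
    have : ⁅x, m⁆ = 0 := by
      rw [← hc, lie_smul, hz x, smul_zero]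
    rw [this]
    exact Submodule.zero_mem _
  · intro h
    have he : e ∈ (⊥ : LieIdeal F L) := h ▸ hPS (Submodule.mem_sup_left
      (Submodule.mem_span_singleton_self e))
    rw [LieSubmodule.mem_bot] at he
    exact heV (he ▸ V.zero_mem)
  · intro h
    have he : z ∈ (⊥ : LieIdeal F L) := h ▸ Submodule.mem_span_singleton_self z
    rw [LieSubmodule.mem_bot] at he
    exact hz0 he
  · rw [← LieSubmodule.toSubmodule_inj, LieSubmodule.inf_toSubmodule,
      LieSubmodule.bot_toSubmodule]
    exact hSz
  · rw [← LieSubmodule.toSubmodule_inj, LieSubmodule.sup_toSubmodule,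
      LieSubmodule.top_toSubmodule]
    exact hSzT

end Aux4

/-- Every almost Abelian Lie algebra decomposes as `L = L₀ ⊕ W` with `L₀` an indecomposable almost
Abelian subalgebra and `W` an Abelian ideal contained in the centre; any two such decompositions
have isomorphic `L₀`'s and isomorphic `W`'s. -/
theorem stmt9 (F L : Type*) [Field F] [LieRing L] [LieAlgebra F L]
    (hL : IsAlmostAbelian F L) :
    ∃ (L₀ : LieSubalgebra F L) (W : LieIdeal F L),
      IsCompl L₀.toSubmodule W.toSubmodule ∧
      IsAlmostAbelian F L₀ ∧ LieIndecomposable F L₀ ∧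
      IsLieAbelian W ∧ W ≤ LieAlgebra.center F L ∧
      ∀ (L₀' : LieSubalgebra F L) (W' : LieIdeal F L),
        IsCompl L₀'.toSubmodule W'.toSubmodule →
        IsAlmostAbelian F L₀' → LieIndecomposable F L₀' →
        IsLieAbelian W' → W' ≤ LieAlgebra.center F L →
          Nonempty ((L₀ : Type _) ≃ₗ⁅F⁆ (L₀' : Type _)) ∧
          Nonempty ((W : Type _) ≃ₗ[F] (W' : Type _)) := by
  classical
  obtain ⟨e, V, hab, hideal, heV, hsurj, hD⟩ := aux_setup hL
  set D := LieAlgebra.ad F L e with hDdef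
  have hDapp : ∀ x : L, D x = ⁅e, x⁆ := fun x => by rw [hDdef, LieAlgebra.ad_apply]
  set K : Submodule F L := LinearMap.ker D ⊓ V with hKdef
  set R : Submodule F L := Submodule.map D V with hRdef
  have hRV : R ≤ V := by
    rintro r ⟨v, hv, rfl⟩
    rw [hDapp]
    exact hideal e v hv
  have hspan_inf : ∀ c : F, c • e ∈ V → c = 0 := by
    intro c hc
    by_contra h
    apply heV
    have : e = c⁻¹ • (c • e) := by rw [smul_smul, inv_mul_cancel₀ h, one_smul]
    rw [this]
    exact Submodule.smul_mem _ _ hc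
  obtain ⟨W, -, hWK, hWKR, hWsup⟩ := aux_compl_within K ⊥ (K ⊓ R) bot_le inf_le_left
    (by simp)
  have hWV : W ≤ V := hWK.trans inf_le_right
  have hRW : R ⊓ W = ⊥ := by
    rw [eq_bot_iff]
    intro x hx
    rw [Submodule.mem_inf] at hx
    have : x ∈ W ⊓ (K ⊓ R) :=
      Submodule.mem_inf.mpr ⟨hx.2, Submodule.mem_inf.mpr ⟨hWK hx.2, hx.1⟩⟩
    rw [hWKR] at this
    exact this
  obtain ⟨U, hRU, hUV, hUW, hUWV⟩ := aux_compl_within V R W hRV hWV hRW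
  have hbr_mem : ∀ x y : L, ⁅x, y⁆ ∈ R := by
    intro x y
    obtain ⟨cx, hx⟩ := hsurj x
    obtain ⟨cy, hy⟩ := hsurj y
    rw [aux_lie_eq e V hab hx hy]
    have h1 : ⁅e, y - cy • e⁆ ∈ R := ⟨_, hy, hDapp _⟩
    have h2 : ⁅e, x - cx • e⁆ ∈ R := ⟨_, hx, hDapp _⟩
    exact Submodule.sub_mem _ (Submodule.smul_mem _ _ h1) (Submodule.smul_mem _ _ h2)
  have hKcent : ∀ z ∈ K, ∀ x : L, ⁅x, z⁆ = 0 := by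
    intro z hz x
    rw [hKdef, Submodule.mem_inf] at hz
    obtain ⟨hz1, hz2⟩ := hz
    obtain ⟨c, hc⟩ := hsurj x
    have hze : ⁅e, z⁆ = 0 := by rw [← hDapp]; exact LinearMap.mem_ker.mp hz1
    have hz0 : z - (0 : F) • e ∈ V := by simpa using hz2
    rw [aux_lie_eq e V hab hc hz0]
    simp only [zero_smul, sub_zero, smul_zero]
    rw [hze, smul_zero]
  have hcentK : ∀ z : L, (∀ x : L, ⁅x, z⁆ = 0) → z ∈ K := by
    intro z hz
    obtain ⟨c, hc⟩ := hsurj z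
    have hc0 : c = 0 := by
      by_contra hc0
      obtain ⟨v, hv, hvne⟩ := hD
      apply hvne
      have h1 : ⁅z, v⁆ = 0 := by rw [aux_skew, hz v, neg_zero]
      have h2 : v - (0 : F) • e ∈ V := by simpa using hv
      rw [aux_lie_eq e V hab hc h2] at h1
      simp only [zero_smul, sub_zero, smul_zero] at h1
      rcases smul_eq_zero.mp h1 with h | h
      · exact absurd h hc0
      · simpa using h
    have hzV : z ∈ V := by rw [hc0] at hc; simpa using hc
    refine Submodule.mem_inf.mpr ⟨LinearMap.mem_ker.mpr ?_, hzV⟩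
    rw [hDapp]
    exact hz e
  have hKU : ∀ k ∈ K, k ∈ U → k ∈ R := by
    intro k hk hkU
    have hkK2 : k ∈ W ⊔ (K ⊓ R) := by rw [hWsup]; exact hk
    obtain ⟨w, hw, r, hr, hwr⟩ := Submodule.mem_sup.mp hkK2
    have hrR : r ∈ R := (Submodule.mem_inf.mp hr).2
    have hwU : w ∈ U := by
      have hweq : w = k - r := by rw [← hwr]; abel
      rw [hweq]
      exact Submodule.sub_mem _ hkU (hRU hrR)
    have hwb : w ∈ U ⊓ W := Submodule.mem_inf.mpr ⟨hwU, hw⟩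
    rw [hUW, Submodule.mem_bot] at hwb
    rw [← hwr, hwb, zero_add]
    exact hrR
  -- the subalgebra L₀
  set M : Submodule F L := U ⊔ Submodule.span F ({e} : Set L) with hMdef
  have heM : e ∈ M := Submodule.mem_sup_right (Submodule.mem_span_singleton_self e)
  have hUM : U ≤ M := le_sup_left
  set L₀ : LieSubalgebra F L := { M with lie_mem' := fun _ _ => hUM (hRU (hbr_mem _ _)) }
    with hL₀def
  have hmemL₀ : ∀ x : L, x ∈ L₀ ↔ x ∈ M := fun x => Iff.rfl
  have hL₀M : L₀.toSubmodule = M := rfl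
  -- membership of V-elements of M in U
  have hVM : ∀ k : L, k ∈ V → k ∈ M → k ∈ U := by
    intro k hk hkM
    obtain ⟨u, hu, s, hs, hus⟩ := Submodule.mem_sup.mp hkM
    obtain ⟨c, hc⟩ := Submodule.mem_span_singleton.mp hs
    have hceV : c • e ∈ V := by
      have : c • e = k - u := by rw [← hus, hc]; abel
      rw [this]
      exact Submodule.sub_mem _ hk (hUV hu)
    have hc0 := hspan_inf c hceV
    rw [← hus, ← hc, hc0, zero_smul, add_zero]
    exact hu
  have hKM : ∀ k : L, k ∈ K → k ∈ M → k ∈ R := fun k hk hkM =>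
    hKU k hk (hVM k ((Submodule.mem_inf.mp hk).2) hkM)
  -- W as an ideal, centrality
  have hWcent : ∀ w ∈ W, ∀ x : L, ⁅x, w⁆ = 0 := fun w hw x => hKcent w (hWK hw) x
  set Wi : LieIdeal F L := ⟨W, fun {x m} hm => by
    rw [hWcent m hm x]; exact W.zero_mem⟩ with hWidef
  have hWiW : Wi.toSubmodule = W := rfl
  -- IsCompl
  have hdisj : L₀.toSubmodule ⊓ W = ⊥ := by
    rw [eq_bot_iff]
    intro x hx
    rw [Submodule.mem_inf] at hx
    obtain ⟨hx1, hx2⟩ := hx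
    have hxU : x ∈ U := hVM x (hWV hx2) hx1
    have : x ∈ U ⊓ W := Submodule.mem_inf.mpr ⟨hxU, hx2⟩
    rw [hUW] at this
    exact this
  have hcodis : L₀.toSubmodule ⊔ W = ⊤ := by
    rw [eq_top_iff]
    intro x _
    obtain ⟨c, hc⟩ := hsurj x
    have hxV : x - c • e ∈ U ⊔ W := by rw [hUWV]; exact hc
    obtain ⟨u, hu, w, hw, huw⟩ := Submodule.mem_sup.mp hxV
    have h2 : u + w + c • e = x := by rw [huw]; abel
    have hxx : x = (u + c • e) + w := by rw [← h2]; abel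
    rw [hxx]
    refine Submodule.add_mem _ (Submodule.mem_sup_left ?_) (Submodule.mem_sup_right hw)
    exact Submodule.add_mem _ (hUM hu)
      (Submodule.mem_sup_right (Submodule.smul_mem _ _ (Submodule.mem_span_singleton_self e)))
  have hcompl : IsCompl L₀.toSubmodule W := ⟨disjoint_iff.mpr hdisj, codisjoint_iff.mpr hcodis⟩
  -- setup data for L₀
  set e₀ : ↥L₀ := ⟨e, heM⟩ with he₀def
  set V₀ : Submodule F ↥L₀ :=
    { carrier := {x : ↥L₀ | (x : L) ∈ U}
      add_mem' := fun ha hb => U.add_mem ha hb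
      zero_mem' := U.zero_mem
      smul_mem' := fun c x hx => U.smul_mem c hx } with hV₀def
  have hmemV₀ : ∀ x : ↥L₀, x ∈ V₀ ↔ (x : L) ∈ U := fun x => Iff.rfl
  have hab₀ : ∀ a ∈ V₀, ∀ b ∈ V₀, ⁅a, b⁆ = (0 : ↥L₀) := by
    intro a ha b hb
    exact Subtype.ext (hab _ (hUV ha) _ (hUV hb))
  have heV₀ : e₀ ∉ V₀ := fun h => heV (hUV h)
  have hsurj₀ : ∀ x : ↥L₀, ∃ c : F, x - c • e₀ ∈ V₀ := by
    intro x
    obtain ⟨u, hu, s, hs, hus⟩ := Submodule.mem_sup.mp x.property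
    obtain ⟨c, hc⟩ := Submodule.mem_span_singleton.mp hs
    refine ⟨c, ?_⟩
    show ((x : L) - c • e) ∈ U
    rw [← hus, ← hc]
    simpa using hu
  have hD₀ : ∃ v ∈ V₀, ⁅e₀, v⁆ ≠ (0 : ↥L₀) := by
    obtain ⟨v, hv, hvne⟩ := hD
    have hvUW : v ∈ U ⊔ W := by rw [hUWV]; exact hv
    obtain ⟨u, hu, w, hw, huw⟩ := Submodule.mem_sup.mp hvUW
    refine ⟨⟨u, hUM hu⟩, hu, ?_⟩
    intro h0
    apply hvne
    have h1 : ⁅e, u⁆ = 0 := congrArg Subtype.val h0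
    rw [← huw, lie_add, h1, zero_add, hWcent w hw e]
  have hker₀ : ∀ v ∈ V₀, ⁅e₀, v⁆ = (0 : ↥L₀) → ∃ x : ↥L₀, ⁅e₀, x⁆ = v := by
    intro v hv h0
    have h1 : ⁅e, (v : L)⁆ = 0 := congrArg Subtype.val h0
    have hvK : (v : L) ∈ K := Submodule.mem_inf.mpr
      ⟨LinearMap.mem_ker.mpr (by rw [hDapp]; exact h1), hUV hv⟩
    obtain ⟨w', hw', hDw⟩ := hKU _ hvK hv
    have hw'UW : w' ∈ U ⊔ W := by rw [hUWV]; exact hw'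
    obtain ⟨u', hu', wp, hwp, huwp⟩ := Submodule.mem_sup.mp hw'UW
    refine ⟨⟨u', hUM hu'⟩, ?_⟩
    apply Subtype.ext
    show ⁅e, u'⁆ = (v : L)
    have hDwp : D wp = 0 := LinearMap.mem_ker.mp (Submodule.mem_inf.mp (hWK hwp)).1
    have : D u' = D w' := by
      rw [← huwp, map_add, hDwp, add_zero]
    rw [← hDapp, this, hDw]
  have hindec₀ : LieIndecomposable F ↥L₀ := aux_indecomp e₀ V₀ hab₀ heV₀ hsurj₀ hD₀ hker₀
  -- almost abelian for L₀
  set I₀ : LieIdeal F ↥L₀ := ⟨V₀, fun {x m} _ => hRU (hbr_mem (x : L) (m : L))⟩ with hI₀def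
  have halm₀ : IsAlmostAbelian F ↥L₀ := by
    constructor
    · intro habs
      obtain ⟨v, hv, hvne⟩ := hD₀
      exact hvne (habs.trivial e₀ v)
    · refine ⟨I₀, ⟨fun a b => ?_⟩, ?_⟩
      · apply Subtype.ext
        apply Subtype.ext
        exact hab _ (hUV a.property) _ (hUV b.property)
      · haveI : NoZeroSMulDivisors F (↥L₀ ⧸ I₀.toSubmodule) := by
          constructor
          intro c x h
          rcases eq_or_ne c 0 with h0 | h0
          · exact Or.inl h0
          · right
            have hxe : x = c⁻¹ • (c • x) := by rw [smul_smul, inv_mul_cancel₀ h0, one_smul]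
            rw [hxe, h, smul_zero]
        apply rank_eq_one (Submodule.Quotient.mk e₀)
        · intro h
          rw [Submodule.Quotient.mk_eq_zero] at h
          exact heV (hUV h)
        · intro w
          obtain ⟨x, rfl⟩ := Submodule.Quotient.mk_surjective _ w
          obtain ⟨u, hu, s, hs, hus⟩ := Submodule.mem_sup.mp x.property
          obtain ⟨c, hc⟩ := Submodule.mem_span_singleton.mp hs
          refine ⟨c, ?_⟩
          rw [← Submodule.Quotient.mk_smul, Submodule.Quotient.eq]
          show (c • e₀ - x : ↥L₀) ∈ V₀
          show ((c • e₀ - x : ↥L₀) : L) ∈ U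
          have : ((c • e₀ - x : ↥L₀) : L) = c • e - (x : L) := rfl
          rw [this, ← hus, ← hc]
          simpa using U.neg_mem hu
  -- abelian and central for Wi
  have habWi : IsLieAbelian ↥Wi := by
    constructor
    intro a b
    exact Subtype.ext (hWcent _ b.property (a : L))
  have hcentWi : Wi ≤ LieAlgebra.center F L := by
    intro x hx
    exact (LieModule.mem_maxTrivSubmodule F L L x).mpr (fun y => hWcent x hx y)
  refine ⟨L₀, Wi, hcompl, halm₀, hindec₀, habWi, hcentWi, ?_⟩
  -- uniqueness
  intro L₀' W' hcompl' halm' hind' hW'ab hW'cent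
  obtain ⟨e', V', hab', hideal', heV', hsurj', hD'⟩ := aux_setup halm'
  have hW'cent' : ∀ w ∈ W'.toSubmodule, ∀ x : L, ⁅x, w⁆ = 0 := by
    intro w hw x
    exact (LieModule.mem_maxTrivSubmodule F L L w).mp (hW'cent hw) x
  have hW'K : ∀ w ∈ W'.toSubmodule, w ∈ K := fun w hw => hcentK w (hW'cent' w hw)
  have hsup' : L₀'.toSubmodule ⊔ W'.toSubmodule = ⊤ := by
    rw [← codisjoint_iff]; exact hcompl'.codisjoint
  have hinf' : ∀ x : L, x ∈ L₀'.toSubmodule → x ∈ W'.toSubmodule → x = 0 := by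
    intro x h1 h2
    have hd := hcompl'.disjoint
    rw [disjoint_iff] at hd
    have hx : x ∈ L₀'.toSubmodule ⊓ W'.toSubmodule := Submodule.mem_inf.mpr ⟨h1, h2⟩
    rw [hd, Submodule.mem_bot] at hx
    exact hx
  have hRL' : R ≤ L₀'.toSubmodule := by
    rintro r ⟨v, hv, rfl⟩
    have he' : e ∈ L₀'.toSubmodule ⊔ W'.toSubmodule := by rw [hsup']; trivial
    obtain ⟨a, ha, w, hw, haw⟩ := Submodule.mem_sup.mp he'
    have hv' : v ∈ L₀'.toSubmodule ⊔ W'.toSubmodule := by rw [hsup']; trivial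
    obtain ⟨b, hb, w2, hw2, hbw⟩ := Submodule.mem_sup.mp hv'
    have hDv : D v = ⁅a, b⁆ := by
      rw [hDapp, ← haw, ← hbw, add_lie, lie_add, lie_add, hW'cent' w2 hw2 a,
        hW'cent' w2 hw2 w,
        (by rw [aux_skew, hW'cent' w hw b, neg_zero] : ⁅w, b⁆ = (0 : L))]
      abel
    rw [hDv]
    exact LieSubalgebra.lie_mem L₀' ha hb
  have hKL' : ∀ k : L, k ∈ K → k ∈ L₀'.toSubmodule → k ∈ R := by
    intro k hk hkL
    have hcentL' : ∀ x : ↥L₀', ⁅x, (⟨k, hkL⟩ : ↥L₀')⁆ = 0 := by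
      intro x
      exact Subtype.ext (hKcent k hk (x : L))
    obtain ⟨x, hx⟩ := aux_center_le_range e' V' hab' hideal' heV' hsurj' hD' hind'
      _ hcentL'
    have hxval : ⁅(e' : L), (x : L)⁆ = k := congrArg Subtype.val hx
    rw [← hxval]
    exact hbr_mem _ _
  -- W-part equivalence
  have hW'R : W'.toSubmodule ⊓ (K ⊓ R) = ⊥ := by
    rw [eq_bot_iff]
    intro x hx
    rw [Submodule.mem_inf] at hx
    obtain ⟨h1, h2⟩ := hx
    rw [Submodule.mem_bot]
    exact hinf' x (hRL' (Submodule.mem_inf.mp h2).2) h1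
  have hW'sup : W'.toSubmodule ⊔ (K ⊓ R) = K := by
    apply le_antisymm
    · exact sup_le (fun w hw => hW'K w hw) inf_le_left
    · intro k hk
      have hk' : k ∈ L₀'.toSubmodule ⊔ W'.toSubmodule := by rw [hsup']; trivial
      obtain ⟨a, ha, w, hw, haw⟩ := Submodule.mem_sup.mp hk'
      have haK : a ∈ K := by
        have : a = k - w := by rw [← haw]; abel
        rw [this]
        exact Submodule.sub_mem _ hk (hW'K w hw)
      have haR : a ∈ R := hKL' a haK ha
      rw [← haw]
      exact Submodule.add_mem _
        (Submodule.mem_sup_right (Submodule.mem_inf.mpr ⟨haK, haR⟩))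
        (Submodule.mem_sup_left hw)
  obtain ⟨ew⟩ := aux_equiv_of_compl K (K ⊓ R) W W'.toSubmodule inf_le_left hWK
    (fun w hw => hW'K w hw) hWKR hWsup hW'R hW'sup
  -- the Lie algebra equivalence
  set pr := Submodule.linearProjOfIsCompl L₀.toSubmodule W hcompl with hprdef
  have hpr_left : ∀ x : ↥L₀, pr (x : L) = x := fun x =>
    Submodule.linearProjOfIsCompl_apply_left hcompl x
  have hsub_mem : ∀ x : L, x - (pr x : L) ∈ W := by
    intro x
    have h1 : pr ((pr x : L)) = pr x := hpr_left (pr x)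
    have h2 : pr (x - (pr x : L)) = 0 := by rw [map_sub, h1, sub_self]
    have h3 := Submodule.linearProjOfIsCompl_ker hcompl
    rw [← h3]
    exact LinearMap.mem_ker.mpr h2
  set fmap : ↥L₀' →ₗ[F] ↥L₀ :=
    { toFun := fun x => pr (x : L)
      map_add' := fun a b => by
        have h : ((a + b : ↥L₀') : L) = (a : L) + (b : L) := rfl
        simp only [h, map_add]
      map_smul' := fun c a => by
        have h : ((c • a : ↥L₀') : L) = c • (a : L) := rfl
        simp only [h, map_smul, RingHom.id_apply] } with hfdef
  have hfapp : ∀ x : ↥L₀', fmap x = pr (x : L) := fun x => rfl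
  have hflie : ∀ x y : ↥L₀', fmap ⁅x, y⁆ = ⁅fmap x, fmap y⁆ := by
    intro x y
    have hbrm : ⁅(x : L), (y : L)⁆ ∈ L₀ := hUM (hRU (hbr_mem _ _))
    have h1 : fmap ⁅x, y⁆ = ⟨⁅(x : L), (y : L)⁆, hbrm⟩ := by
      rw [hfapp, LieSubalgebra.coe_bracket]
      exact hpr_left ⟨_, hbrm⟩
    rw [h1]
    apply Subtype.ext
    show ⁅(x : L), (y : L)⁆ = (⁅fmap x, fmap y⁆ : ↥L₀)
    rw [LieSubalgebra.coe_bracket, hfapp, hfapp]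
    have hwx := hsub_mem (x : L)
    have hwy := hsub_mem (y : L)
    have hx2 : (x : L) = (pr (x : L) : L) + ((x : L) - (pr (x : L) : L)) := by abel
    have hy2 : (y : L) = (pr (y : L) : L) + ((y : L) - (pr (y : L) : L)) := by abel
    calc ⁅(x : L), (y : L)⁆
        = ⁅(pr (x : L) : L) + ((x : L) - (pr (x : L) : L)),
           (pr (y : L) : L) + ((y : L) - (pr (y : L) : L))⁆ := by rw [← hx2, ← hy2]
      _ = ⁅(pr (x : L) : L), (pr (y : L) : L)⁆ := by
          rw [add_lie, lie_add, lie_add, hWcent _ hwy _, hWcent _ hwy _,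
            (by rw [aux_skew, hWcent _ hwx _, neg_zero] :
              ⁅(x : L) - (pr (x : L) : L), (pr (y : L) : L)⁆ = (0 : L))]
          abel
  set flie : ↥L₀' →ₗ⁅F⁆ ↥L₀ := { fmap with map_lie' := fun {x y} => hflie x y } with hfliedef
  have hflieapp : ∀ x : ↥L₀', flie x = pr (x : L) := fun x => rfl
  have hinj : Function.Injective flie := by
    intro a b hab2
    have h0 : pr ((a : L) - (b : L)) = 0 := by
      rw [map_sub]
      rw [hflieapp, hflieapp] at hab2
      rw [hab2, sub_self]
    have hvalW : (a : L) - (b : L) ∈ W := by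
      have := hsub_mem ((a : L) - (b : L))
      rw [h0] at this
      simpa using this
    have hvalL' : (a : L) - (b : L) ∈ L₀'.toSubmodule :=
      Submodule.sub_mem _ a.property b.property
    have hvalR : (a : L) - (b : L) ∈ R := hKL' _ (hWK hvalW) hvalL'
    have : (a : L) - (b : L) ∈ R ⊓ W := Submodule.mem_inf.mpr ⟨hvalR, hvalW⟩
    rw [hRW, Submodule.mem_bot, sub_eq_zero] at this
    exact Subtype.ext this
  have hsurjf : Function.Surjective flie := by
    intro y
    have hy' : (y : L) ∈ L₀'.toSubmodule ⊔ W'.toSubmodule := by rw [hsup']; trivial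
    obtain ⟨a, ha, w, hw, haw⟩ := Submodule.mem_sup.mp hy'
    have hwK : w ∈ K := hW'K w hw
    have hpwW : w - (pr w : L) ∈ W := hsub_mem w
    have hpwK : (pr w : L) ∈ K := by
      have : (pr w : L) = w - (w - (pr w : L)) := by abel
      rw [this]
      exact Submodule.sub_mem _ hwK (hWK hpwW)
    have hpwR : (pr w : L) ∈ R := hKM _ hpwK (pr w).property
    have hpwL' : (pr w : L) ∈ L₀'.toSubmodule := hRL' hpwR
    refine ⟨⟨a + (pr w : L), Submodule.add_mem _ ha hpwL'⟩, ?_⟩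
    apply Subtype.ext
    show (pr (a + (pr w : L)) : L) = (y : L)
    have h1 : pr ((pr w : L)) = pr w := hpr_left (pr w)
    have h2 : pr (y : L) = y := hpr_left y
    calc (pr (a + (pr w : L)) : L) = ((pr a + pr w : ↥L₀) : L) := by rw [map_add, h1]
      _ = (pr (a + w) : L) := by rw [map_add]
      _ = (pr (y : L) : L) := by rw [haw]
      _ = (y : L) := by rw [h2]
  exact ⟨⟨(LieEquiv.ofBijective flie ⟨hinj, hsurjf⟩).symm⟩, ⟨ew⟩⟩
end

section
/- For any two codimension 1 Abelian ideals V and V' of an almost Abelian Lie algebra L, there exists an automorphism φ of L with φ(V) = V'. -/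
private lemma exists_functional_aux (F M : Type*) [Field F] [AddCommGroup M] [Module F M]
    (p : Submodule F M) (hp : Module.rank F (M ⧸ p) = 1) (e : M) (he : e ∉ p) :
    ∃ f : M →ₗ[F] F, f e = 1 ∧ LinearMap.ker f = p := by
  haveI : Module.Finite F (M ⧸ p) := Module.finite_of_rank_eq_one hp
  have hfr : Module.finrank F (M ⧸ p) = 1 := Module.finrank_eq_of_rank_eq (by simpa using hp)
  have hne : (Submodule.Quotient.mk e : M ⧸ p) ≠ 0 := by
    simpa [Submodule.Quotient.mk_eq_zero] using he
  let b := FiniteDimensional.basisSingleton Unit hfr (Submodule.Quotient.mk e) hne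
  refine ⟨(Finsupp.lapply () ∘ₗ b.repr.toLinearMap) ∘ₗ p.mkQ, ?_, ?_⟩
  · have : b () = Submodule.Quotient.mk e := FiniteDimensional.basisSingleton_apply _ _ _ _ _
    simp [← this, Module.Basis.repr_self]
  · ext x
    simp only [LinearMap.mem_ker, LinearMap.comp_apply, Finsupp.lapply_apply,
      Submodule.mkQ_apply, LinearEquiv.coe_coe]
    constructor
    · intro h
      have : b.repr (Submodule.Quotient.mk x) = 0 := Finsupp.ext fun i => by cases i; exact h
      have := b.repr.map_eq_zero_iff.mp this
      simpa [Submodule.Quotient.mk_eq_zero] using this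
    · intro h
      have : (Submodule.Quotient.mk x : M ⧸ p) = 0 := (Submodule.Quotient.mk_eq_zero p).mpr h
      simp [this]

private lemma le_eq_aux (F M : Type*) [Field F] [AddCommGroup M] [Module F M]
    (p q : Submodule F M) (hp : Module.rank F (M ⧸ p) = 1) (hq : Module.rank F (M ⧸ q) = 1)
    (hle : p ≤ q) : p = q := by
  by_contra hne
  obtain ⟨e, heq, hep⟩ : ∃ e, e ∈ q ∧ e ∉ p := by
    by_contra hc
    push_neg at hc
    exact hne (le_antisymm hle hc)
  obtain ⟨f, hf1, hfk⟩ := exists_functional_aux F M p hp e hep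
  have : q = ⊤ := by
    rw [eq_top_iff]
    intro x _
    have hker : x - f x • e ∈ p := by
      rw [← hfk]; simp [hf1, mul_comm]
    have : x - f x • e ∈ q := hle hker
    have := q.add_mem this (q.smul_mem (f x) heq)
    simpa using this
  rw [this] at hq
  haveI : Subsingleton (M ⧸ (⊤ : Submodule F M)) :=
    Submodule.Quotient.subsingleton_iff.mpr rfl
  rw [rank_subsingleton'] at hq
  exact zero_ne_one hq

private lemma abelian_bracket_aux (F L : Type*) [Field F] [LieRing L] [LieAlgebra F L]
    (I : LieIdeal F L) (h : IsLieAbelian I) {x y : L} (hx : x ∈ I) (hy : y ∈ I) :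
    ⁅x, y⁆ = 0 := by
  have := h.trivial ⟨x, hx⟩ ⟨y, hy⟩
  have h2 := congrArg (Subtype.val) this
  simp only [LieIdeal.coe_bracket_of_module] at h2
  exact h2

/-- Any two codimension 1 Abelian ideals of an almost Abelian Lie algebra are related by an
automorphism. -/
theorem stmt14 (F L : Type*) [Field F] [LieRing L] [LieAlgebra F L]
    (hL : IsAlmostAbelian F L) (V₁ V₂ : LieIdeal F L)
    (h₁ : IsLieAbelian V₁) (hcod₁ : Module.rank F (L ⧸ V₁.toSubmodule) = 1)
    (h₂ : IsLieAbelian V₂) (hcod₂ : Module.rank F (L ⧸ V₂.toSubmodule) = 1) :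
    ∃ φ : L ≃ₗ⁅F⁆ L,
      Submodule.map φ.toLieHom.toLinearMap V₁.toSubmodule = V₂.toSubmodule := by
  by_cases heq : V₁.toSubmodule = V₂.toSubmodule
  · refine ⟨LieEquiv.refl, ?_⟩
    have hid : ((LieEquiv.refl : L ≃ₗ⁅F⁆ L).toLieHom.toLinearMap) = LinearMap.id := rfl
    rw [hid, Submodule.map_id]
    exact heq
  -- V₁ ≠ V₂ : neither contains the other
  have hn12 : ¬(V₁.toSubmodule ≤ V₂.toSubmodule) := fun h =>
    heq (le_eq_aux F L _ _ hcod₁ hcod₂ h)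
  have hn21 : ¬(V₂.toSubmodule ≤ V₁.toSubmodule) := fun h =>
    (heq (le_eq_aux F L _ _ hcod₂ hcod₁ h).symm)
  obtain ⟨e₁, he₁V₁, he₁V₂⟩ := SetLike.not_le_iff_exists.mp hn12
  obtain ⟨e₂, he₂V₂, he₂V₁⟩ := SetLike.not_le_iff_exists.mp hn21
  obtain ⟨f₁, hf₁e₂, hf₁ker⟩ := exists_functional_aux F L V₁.toSubmodule hcod₁ e₂ he₂V₁
  obtain ⟨f₂, hf₂e₁, hf₂ker⟩ := exists_functional_aux F L V₂.toSubmodule hcod₂ e₁ he₁V₂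
  have hf₁e₁ : f₁ e₁ = 0 := by rw [← LinearMap.mem_ker, hf₁ker]; exact he₁V₁
  have hf₂e₂ : f₂ e₂ = 0 := by rw [← LinearMap.mem_ker, hf₂ker]; exact he₂V₂
  have mem₁ : ∀ x : L, f₁ x = 0 ↔ x ∈ V₁.toSubmodule := fun x => by
    rw [← hf₁ker]; exact Iff.rfl
  have mem₂ : ∀ x : L, f₂ x = 0 ↔ x ∈ V₂.toSubmodule := fun x => by
    rw [← hf₂ker]; exact Iff.rfl
  -- decomposition: the "w" part lies in V₁ ⊓ V₂
  set W : Submodule F L := V₁.toSubmodule ⊓ V₂.toSubmodule with hW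
  have hdec : ∀ x : L, x - f₂ x • e₁ - f₁ x • e₂ ∈ W := by
    intro x
    refine Submodule.mem_inf.mpr ⟨?_, ?_⟩
    · rw [← mem₁]; simp [hf₁e₁, hf₁e₂]
    · rw [← mem₂]; simp [hf₂e₁, hf₂e₂]
  -- W is central
  have hcent : ∀ w ∈ W, ∀ x : L, ⁅w, x⁆ = 0 := by
    intro w hw x
    obtain ⟨hw1, hw2⟩ := Submodule.mem_inf.mp hw
    have hx := hdec x
    obtain ⟨hx1, hx2⟩ := Submodule.mem_inf.mp hx
    set u := x - f₂ x • e₁ - f₁ x • e₂ with hu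
    have hxx : x = u + f₂ x • e₁ + f₁ x • e₂ := by rw [hu]; abel
    rw [hxx, lie_add, lie_add, lie_smul, lie_smul]
    have h1 : ⁅w, u⁆ = 0 := abelian_bracket_aux F L V₁ h₁ hw1 hx1
    have h2 : ⁅w, e₁⁆ = 0 := abelian_bracket_aux F L V₁ h₁ hw1 he₁V₁
    have h3 : ⁅w, e₂⁆ = 0 := abelian_bracket_aux F L V₂ h₂ hw2 he₂V₂
    rw [h1, h2, h3]; simp
  -- bracket formula
  set c : L := ⁅e₁, e₂⁆ with hc
  have hcW : c ∈ W := Submodule.mem_inf.mpr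
    ⟨lie_mem_left F L V₁ e₁ e₂ he₁V₁, lie_mem_right F L V₂ e₁ e₂ he₂V₂⟩
  have hbr : ∀ x y : L, ⁅x, y⁆ = (f₂ x * f₁ y - f₂ y * f₁ x) • c := by
    intro x y
    have hx := hdec x; have hy := hdec y
    set u := x - f₂ x • e₁ - f₁ x • e₂ with hu
    set v := y - f₂ y • e₁ - f₁ y • e₂ with hv
    have hxx : x = u + f₂ x • e₁ + f₁ x • e₂ := by rw [hu]; abel
    have hyy : y = v + f₂ y • e₁ + f₁ y • e₂ := by rw [hv]; abel
    calc ⁅x, y⁆ = ⁅u + f₂ x • e₁ + f₁ x • e₂, v + f₂ y • e₁ + f₁ y • e₂⁆ := by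
          rw [← hxx, ← hyy]
      _ = (f₂ x * f₁ y - f₂ y * f₁ x) • c := by
          have hu0 : ∀ z : L, ⁅u, z⁆ = 0 := hcent u hx
          have hv0 : ∀ z : L, ⁅z, v⁆ = 0 := fun z => by
            rw [← lie_skew, hcent v hy z, neg_zero]
          simp only [lie_add, add_lie, lie_smul, smul_lie, hu0, hv0, lie_self,
            smul_zero, zero_add, add_zero, smul_smul]
          rw [← lie_skew e₂ e₁, ← hc, smul_neg, ← neg_smul, ← add_smul]
          congr 1
          ring
  -- the automorphism
  set s : L := e₁ + e₂ with hs
  set φ : L →ₗ[F] L := (f₁ + f₂).smulRight s - LinearMap.id with hφ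
  have hφ_apply : ∀ x : L, φ x = (f₁ x + f₂ x) • s - x := fun x => rfl
  have hf₁s : f₁ s = 1 := by rw [hs]; simp [hf₁e₁, hf₁e₂]
  have hf₂s : f₂ s = 1 := by rw [hs]; simp [hf₂e₁, hf₂e₂]
  have hf₁φ : ∀ x : L, f₁ (φ x) = f₂ x := by
    intro x
    rw [hφ_apply, map_sub, map_smul, hf₁s]
    simp only [smul_eq_mul, mul_one]
    ring
  have hf₂φ : ∀ x : L, f₂ (φ x) = f₁ x := by
    intro x
    rw [hφ_apply, map_sub, map_smul, hf₂s]
    simp only [smul_eq_mul, mul_one]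
    ring
  have hinv : Function.Involutive φ := by
    intro x
    have h1 := hf₁φ x
    have h2 := hf₂φ x
    rw [hφ_apply (φ x), h1, h2, hφ_apply x]
    module
  have hlie : ∀ x y : L, ⁅φ x, φ y⁆ = φ ⁅x, y⁆ := by
    intro x y
    rw [hbr (φ x) (φ y), hf₁φ, hf₁φ, hf₂φ, hf₂φ]
    rw [hφ_apply ⁅x, y⁆]
    rw [hbr x y]
    have hf₁c : f₁ c = 0 := (mem₁ c).mpr hcW.1
    have hf₂c : f₂ c = 0 := (mem₂ c).mpr hcW.2
    rw [map_smul, map_smul, hf₁c, hf₂c]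
    simp only [smul_eq_mul, mul_zero, add_zero, zero_smul, zero_sub]
    rw [← neg_smul]
    congr 1
    ring
  refine ⟨{ toLinearMap := φ, map_lie' := fun {x y} => (hlie x y).symm,
            invFun := φ, left_inv := hinv, right_inv := hinv }, ?_⟩
  ext y
  simp only [Submodule.mem_map]
  constructor
  · rintro ⟨x, hx, rfl⟩
    rw [← mem₂]
    show f₂ (φ x) = 0
    rw [hf₂φ]
    exact (mem₁ x).mpr hx
  · intro hy
    refine ⟨φ y, ?_, hinv y⟩
    rw [← mem₁]
    show f₁ (φ y) = 0
    rw [hf₁φ]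
    exact (mem₂ y).mpr hy
end

section
/- Two almost Abelian Lie algebras L = F e₀ ⋉ V and L' = F e₀' ⋉ V' are isomorphic as Lie algebras if and only if there exist λ ∈ F* and a linear isomorphism φ : V → V' such that φ ∘ ad_{e₀} = λ · ad_{e₀'} ∘ φ. -/
variable {F : Type*} [Field F] {V : Type*} [AddCommGroup V] [Module F V]

section Helpers

variable {F : Type*} [Field F] {V V' : Type*} [AddCommGroup V] [Module F V]
  [AddCommGroup V'] [Module F V'] {T : Module.End F V} {T' : Module.End F V'}

namespace AA

lemma emap_add {L₁ L₂ : Type*} [LieRing L₁] [LieAlgebra F L₁] [LieRing L₂] [LieAlgebra F L₂]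
    (e : L₁ ≃ₗ⁅F⁆ L₂) (x y : L₁) : e (x + y) = e x + e y :=
  (e : L₁ ≃ₗ[F] L₂).map_add x y

lemma emap_smul {L₁ L₂ : Type*} [LieRing L₁] [LieAlgebra F L₁] [LieRing L₂] [LieAlgebra F L₂]
    (e : L₁ ≃ₗ⁅F⁆ L₂) (c : F) (x : L₁) : e (c • x) = c • e x :=
  (e : L₁ ≃ₗ[F] L₂).map_smul c x

lemma emap_sub {L₁ L₂ : Type*} [LieRing L₁] [LieAlgebra F L₁] [LieRing L₂] [LieAlgebra F L₂]
    (e : L₁ ≃ₗ⁅F⁆ L₂) (x y : L₁) : e (x - y) = e x - e y :=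
  map_sub (e : L₁ ≃ₗ[F] L₂) x y

lemma emap_zero {L₁ L₂ : Type*} [LieRing L₁] [LieAlgebra F L₁] [LieRing L₂] [LieAlgebra F L₂]
    (e : L₁ ≃ₗ⁅F⁆ L₂) : e (0 : L₁) = 0 :=
  map_zero (e : L₁ ≃ₗ[F] L₂)

lemma einj {L₁ L₂ : Type*} [LieRing L₁] [LieAlgebra F L₁] [LieRing L₂] [LieAlgebra F L₂]
    (e : L₁ ≃ₗ⁅F⁆ L₂) : Function.Injective e :=
  EquivLike.injective e

lemma esurj {L₁ L₂ : Type*} [LieRing L₁] [LieAlgebra F L₁] [LieRing L₂] [LieAlgebra F L₂]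
    (e : L₁ ≃ₗ⁅F⁆ L₂) : Function.Surjective e :=
  EquivLike.surjective e

lemma bracket_eq (x y : AA F V T) :
    ⁅x, y⁆ = ((0, x.1 • T y.2 - y.1 • T x.2) : F × V) := rfl

lemma ext' {x y : AA F V T} (h1 : x.1 = y.1) (h2 : x.2 = y.2) : x = y := Prod.ext h1 h2

@[simp] lemma incl_fst (v : V) : (incl T v).1 = 0 := rfl
@[simp] lemma incl_snd (v : V) : (incl T v).2 = v := rfl
@[simp] lemma e0_fst : (e0 T).1 = 1 := rfl
@[simp] lemma e0_snd : (e0 T).2 = 0 := rfl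
@[simp] lemma smul_fst (c : F) (x : AA F V T) : (c • x).1 = c * x.1 := rfl
@[simp] lemma smul_snd (c : F) (x : AA F V T) : (c • x).2 = c • x.2 := rfl
@[simp] lemma add_fst (x y : AA F V T) : (x + y).1 = x.1 + y.1 := rfl
@[simp] lemma add_snd (x y : AA F V T) : (x + y).2 = x.2 + y.2 := rfl
@[simp] lemma sub_fst (x y : AA F V T) : (x - y).1 = x.1 - y.1 := rfl
@[simp] lemma sub_snd (x y : AA F V T) : (x - y).2 = x.2 - y.2 := rfl
@[simp] lemma neg_fst (x : AA F V T) : (-x).1 = -x.1 := rfl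
@[simp] lemma neg_snd (x : AA F V T) : (-x).2 = -x.2 := rfl
@[simp] lemma zero_fst : ((0 : AA F V T)).1 = 0 := rfl
@[simp] lemma zero_snd : ((0 : AA F V T)).2 = 0 := rfl

lemma decomp (x : AA F V T) : x = x.1 • e0 T + incl T x.2 := by
  refine ext' ?_ ?_
  · show x.1 = x.1 * 1 + 0; simp
  · show x.2 = x.1 • (0 : V) + x.2; simp

end AA

/-- The "good case": the isomorphism maps `0 × V` into `0 × V'`. -/
lemma AA.good (T : Module.End F V) (T' : Module.End F V')
    (e : AA F V T ≃ₗ⁅F⁆ AA F V' T')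
    (h0 : ∀ v : V, (e (AA.incl T v)).1 = 0) :
    ∃ (l : F) (φ : V ≃ₗ[F] V'), l ≠ 0 ∧ ∀ v : V, φ (T v) = l • T' (φ v) := by
  set l : F := (e (AA.e0 T)).1 with hl
  set w' : V' := (e (AA.e0 T)).2 with hw'
  have hg : ∀ v : V, e (AA.incl T v) = AA.incl T' ((e (AA.incl T v)).2) := by
    intro v
    exact AA.ext' (by simp [h0 v]) (by simp)
  -- linear map g
  set g : V →ₗ[F] V' :=
    { toFun := fun v => (e (AA.incl T v)).2
      map_add' := by
        intro u v
        show (e (AA.incl T (u + v))).2 = (e (AA.incl T u)).2 + (e (AA.incl T v)).2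
        rw [map_add (AA.incl T), AA.emap_add]; simp
      map_smul' := by
        intro c v
        show (e (AA.incl T (c • v))).2 = c • (e (AA.incl T v)).2
        rw [map_smul (AA.incl T), AA.emap_smul]; simp } with hgdef
  have hcomp : ∀ x : AA F V T, (e x).1 = x.1 * l ∧ (e x).2 = x.1 • w' + g x.2 := by
    intro x
    have hd : e x = x.1 • e (AA.e0 T) + e (AA.incl T x.2) := by
      conv_lhs => rw [AA.decomp x]
      rw [AA.emap_add, AA.emap_smul]
    constructor
    · rw [hd]; simp [h0 x.2, mul_comm, hl]
    · rw [hd]; simp [hgdef, hw']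
  have hlne : l ≠ 0 := by
    obtain ⟨x, hx⟩ := AA.esurj e (AA.e0 T')
    have h1 : (1 : F) = x.1 * l := by
      have := (hcomp x).1
      rw [hx] at this
      simpa using this
    intro h
    rw [h, mul_zero] at h1
    exact one_ne_zero h1
  have hinj : Function.Injective g := by
    intro u v huv
    have : e (AA.incl T u) = e (AA.incl T v) :=
      AA.ext' (by rw [h0 u, h0 v]) huv
    have := AA.einj e this
    have h2 := congrArg (fun x : AA F V T => x.2) this
    simpa using h2
  have hsurj : Function.Surjective g := by
    intro v'
    set x := e.symm (AA.incl T' v') with hx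
    have hex : e x = AA.incl T' v' := e.apply_symm_apply _
    have h1 : x.1 * l = 0 := by
      have := (hcomp x).1; rw [hex] at this; simpa using this.symm
    have hx1 : x.1 = 0 := by
      rcases mul_eq_zero.1 h1 with h | h
      · exact h
      · exact absurd h hlne
    refine ⟨x.2, ?_⟩
    have := (hcomp x).2
    rw [hex, hx1] at this
    simpa using this.symm
  set φ := LinearEquiv.ofBijective g ⟨hinj, hsurj⟩ with hφ
  refine ⟨l, φ, hlne, ?_⟩
  intro v
  have hml := e.map_lie (AA.e0 T) (AA.incl T v)
  rw [AA.bracket_e0_incl] at hml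
  have h2 := congrArg (fun x : AA F V' T' => x.2) hml
  simp only [AA.bracket_eq] at h2
  have : g (T v) = (e (AA.e0 T)).1 • T' ((e (AA.incl T v)).2)
      - (e (AA.incl T v)).1 • T' ((e (AA.e0 T)).2) := h2
  rw [h0 v] at this
  simp only [hφ, LinearEquiv.ofBijective_apply, hl]
  simp only [zero_smul, sub_zero] at this
  exact this

/-- Construction of a Lie algebra isomorphism from compatible data. -/
def AA.ofCompat (T : Module.End F V) (T' : Module.End F V') (l : F) (hl : l ≠ 0)
    (φ : V ≃ₗ[F] V') (h : ∀ v : V, φ (T v) = l • T' (φ v)) :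
    AA F V T ≃ₗ⁅F⁆ AA F V' T' where
  toFun x := ((l * x.1, φ x.2) : F × V')
  map_add' x y := by
    refine AA.ext' ?_ ?_
    · show l * (x.1 + y.1) = l * x.1 + l * y.1; ring
    · show φ (x.2 + y.2) = φ x.2 + φ y.2; exact map_add φ _ _
  map_smul' c x := by
    refine AA.ext' ?_ ?_
    · show l * (c * x.1) = c * (l * x.1); ring
    · show φ (c • x.2) = c • φ x.2; exact map_smul φ _ _
  map_lie' := by
    intro x y
    refine AA.ext' ?_ ?_
    · show l * 0 = 0; ring
    · show φ (x.1 • T y.2 - y.1 • T x.2)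
        = (l * x.1) • T' (φ y.2) - (l * y.1) • T' (φ x.2)
      rw [map_sub, map_smul, map_smul, h, h, smul_smul, smul_smul, mul_comm x.1 l, mul_comm y.1 l]
  invFun y := ((l⁻¹ * y.1, φ.symm y.2) : F × V)
  left_inv x := by
    refine AA.ext' ?_ ?_
    · show l⁻¹ * (l * x.1) = x.1
      field_simp
    · show φ.symm (φ x.2) = x.2; exact φ.symm_apply_apply _
  right_inv y := by
    refine AA.ext' ?_ ?_
    · show l * (l⁻¹ * y.1) = y.1
      field_simp
    · show φ (φ.symm y.2) = y.2; exact φ.apply_symm_apply _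


/-- An automorphism of `AA F V' T'` used to fix up the "bad case", where `T'` is a rank-one
square-zero operator. -/
def AA.sigma (T' : Module.End F V') (b : V') (ℓ : V' →ₗ[F] F) (c : F)
    (hK1 : ∀ y : V', T' y = ℓ (T' y) • T' b)
    (hb1 : ℓ (T' b) = 1) (hz0 : T' (T' b) = 0) :
    AA F V' T' ≃ₗ⁅F⁆ AA F V' T' where
  toFun y := ((c * y.1 - ℓ (T' y.2), y.1 • b + (y.2 - ℓ (T' y.2) • b)) : F × V')
  map_add' x y := by
    refine AA.ext' ?_ ?_
    · show c * (x.1 + y.1) - ℓ (T' (x.2 + y.2))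
        = (c * x.1 - ℓ (T' x.2)) + (c * y.1 - ℓ (T' y.2))
      rw [map_add, map_add]; ring
    · show (x.1 + y.1) • b + ((x.2 + y.2) - ℓ (T' (x.2 + y.2)) • b)
        = (x.1 • b + (x.2 - ℓ (T' x.2) • b)) + (y.1 • b + (y.2 - ℓ (T' y.2) • b))
      rw [map_add, map_add]
      module
  map_smul' r x := by
    refine AA.ext' ?_ ?_
    · show c * (r * x.1) - ℓ (T' (r • x.2)) = r * (c * x.1 - ℓ (T' x.2))
      rw [map_smul, map_smul, smul_eq_mul]; ring
    · show (r * x.1) • b + (r • x.2 - ℓ (T' (r • x.2)) • b)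
        = r • (x.1 • b + (x.2 - ℓ (T' x.2) • b))
      rw [map_smul, map_smul, smul_eq_mul]
      module
  map_lie' := by
    intro x y
    have hTT : ∀ u : V', T' (T' u) = 0 := by
      intro u
      rw [hK1 u, map_smul, hz0, smul_zero]
    have hTexp : ∀ (s : F) (v : V'), T' (s • b + (v - ℓ (T' v) • b)) = s • T' b := by
      intro s v
      rw [map_add, map_sub, map_smul, map_smul]
      rw [← hK1 v]
      module
    refine AA.ext' ?_ ?_
    · show c * 0 - ℓ (T' (x.1 • T' y.2 - y.1 • T' x.2)) = 0
      rw [map_sub, map_smul, map_smul, hTT, hTT, smul_zero, smul_zero, sub_zero, map_zero]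
      ring
    · show (0 : F) • b + ((x.1 • T' y.2 - y.1 • T' x.2)
          - ℓ (T' (x.1 • T' y.2 - y.1 • T' x.2)) • b)
        = (c * x.1 - ℓ (T' x.2)) • T' (y.1 • b + (y.2 - ℓ (T' y.2) • b))
          - (c * y.1 - ℓ (T' y.2)) • T' (x.1 • b + (x.2 - ℓ (T' x.2) • b))
      rw [hTexp, hTexp]
      rw [map_sub, map_smul, map_smul, hTT, hTT, smul_zero, smul_zero, sub_zero, map_zero]
      rw [hK1 x.2, hK1 y.2]
      have hlx : ℓ (T' x.2) • T' b = ℓ (T' x.2) • T' b := rfl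
      -- now everything is a scalar multiple of T' b
      simp only [map_smul, smul_eq_mul, hb1, mul_one]
      module
  invFun y := ((ℓ (T' y.2), y.2 + ((c - 1) * ℓ (T' y.2) - y.1) • b) : F × V')
  left_inv x := by
    have key : ℓ (T' (x.1 • b + (x.2 - ℓ (T' x.2) • b))) = x.1 := by
      rw [map_add, map_sub, map_smul, map_smul, map_add, map_sub, map_smul, map_smul,
        smul_eq_mul, smul_eq_mul, hb1]
      ring
    refine AA.ext' ?_ ?_
    · show ℓ (T' (x.1 • b + (x.2 - ℓ (T' x.2) • b))) = x.1
      exact key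
    · show (x.1 • b + (x.2 - ℓ (T' x.2) • b))
          + ((c - 1) * ℓ (T' (x.1 • b + (x.2 - ℓ (T' x.2) • b)))
            - (c * x.1 - ℓ (T' x.2))) • b = x.2
      rw [key]
      module
  right_inv y := by
    have key : ℓ (T' (y.2 + ((c - 1) * ℓ (T' y.2) - y.1) • b)) = c * ℓ (T' y.2) - y.1 := by
      rw [map_add, map_smul, map_add, map_smul, smul_eq_mul, hb1]
      ring
    refine AA.ext' ?_ ?_
    · show c * ℓ (T' y.2) - ℓ (T' (y.2 + ((c - 1) * ℓ (T' y.2) - y.1) • b)) = y.1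
      rw [key]; ring
    · show ℓ (T' y.2) • b + ((y.2 + ((c - 1) * ℓ (T' y.2) - y.1) • b)
          - ℓ (T' (y.2 + ((c - 1) * ℓ (T' y.2) - y.1) • b)) • b) = y.2
      rw [key]
      module


lemma AA.emap_neg {L₁ L₂ : Type*} [LieRing L₁] [LieAlgebra F L₁] [LieRing L₂] [LieAlgebra F L₂]
    (e : L₁ ≃ₗ⁅F⁆ L₂) (x : L₁) : e (-x) = - e x :=
  map_neg (e : L₁ ≃ₗ[F] L₂) x

/-- The "bad case": the isomorphism does not map `0 × V` into `0 × V'`.  We fix it up by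
composing with an automorphism of the target. -/
lemma AA.bad (T : Module.End F V) (T' : Module.End F V') (hT' : T' ≠ 0)
    (e : AA F V T ≃ₗ⁅F⁆ AA F V' T') (v₁ : V) (hv1 : (e (AA.incl T v₁)).1 ≠ 0) :
    ∃ e' : AA F V T ≃ₗ⁅F⁆ AA F V' T', ∀ v : V, (e' (AA.incl T v)).1 = 0 := by
  set f : V → F := fun v => (e (AA.incl T v)).1 with hf
  set g : V → V' := fun v => (e (AA.incl T v)).2 with hg
  set v₀ : V := (f v₁)⁻¹ • v₁ with hv₀
  have hf0 : f v₀ = 1 := by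
    show (e (AA.incl T ((f v₁)⁻¹ • v₁))).1 = 1
    rw [map_smul (AA.incl T), AA.emap_smul]
    show (f v₁)⁻¹ * f v₁ = 1
    exact inv_mul_cancel₀ hv1
  set a : V' := g v₀ with ha
  set lam : F := (e (AA.e0 T)).1 with hlam
  set w' : V' := (e (AA.e0 T)).2 with hw'
  -- K2 : T' (g v) = f v • T' a
  have K2 : ∀ v : V, T' (g v) = f v • T' a := by
    intro v
    have h := e.map_lie (AA.incl T v) (AA.incl T v₀)
    have hzz : (⁅AA.incl T v, AA.incl T v₀⁆ : AA F V T) = 0 := by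
      rw [AA.bracket_eq]
      refine AA.ext' ?_ ?_ <;> simp
    rw [hzz, AA.emap_zero] at h
    have h2 := congrArg (fun x : AA F V' T' => x.2) h.symm
    have h3 : f v • T' a - f v₀ • T' (g v) = 0 := h2
    rw [hf0, one_smul] at h3
    exact (sub_eq_zero.1 h3).symm
  set x₀ : AA F V T := AA.e0 T - lam • AA.incl T v₀ with hx₀
  set b : V' := w' - lam • a with hbdef
  have hb : e x₀ = AA.incl T' b := by
    rw [hx₀, AA.emap_sub, AA.emap_smul]
    refine AA.ext' ?_ ?_
    · show lam - lam * f v₀ = 0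
      rw [hf0]; ring
    · show w' - lam • a = b
      rfl
  set z : V' := T' b with hzdef
  -- K3
  have K3 : ∀ v : V, f (T v) = 0 ∧ g (T v) = -(f v • z) := by
    intro v
    have h := e.map_lie (AA.incl T v) x₀
    have hlhs : (⁅AA.incl T v, x₀⁆ : AA F V T) = - AA.incl T (T v) := by
      rw [AA.bracket_eq]
      refine AA.ext' ?_ ?_
      · show (0 : F) = -0
        simp
      · show (AA.incl T v).1 • T x₀.2 - x₀.1 • T ((AA.incl T v).2) = -(T v)
        have h1 : (AA.incl T v).1 = 0 := rfl
        have h2 : x₀.1 = 1 - lam * 0 := rfl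
        have h3 : (AA.incl T v).2 = v := rfl
        rw [h1, h2, h3]
        simp
    rw [hlhs, AA.emap_neg, hb] at h
    constructor
    · have h1 : -(f (T v)) = (0 : F) := congrArg (fun x : AA F V' T' => x.1) h
      exact neg_eq_zero.1 h1
    · have h2 : -(g (T v)) = f v • T' b - (0 : F) • T' (g v) :=
        congrArg (fun x : AA F V' T' => x.2) h
      rw [zero_smul, sub_zero] at h2
      exact neg_eq_iff_eq_neg.mp h2
  have hfT : ∀ v : V, f (T v) = 0 := fun v => (K3 v).1
  have hgT : ∀ v : V, g (T v) = -(f v • z) := fun v => (K3 v).2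
  have hTb : T' b = T' w' - lam • T' a := by
    rw [hbdef, map_sub, map_smul]
  -- K1' : every T' y is a multiple of z
  have K1' : ∀ y : V', ∃ t : F, T' y = t • z := by
    intro y
    set x : AA F V T := e.symm (AA.incl T' y) with hx
    have hex : e x = AA.incl T' y := e.apply_symm_apply _
    have hd : e x = x.1 • e (AA.e0 T) + e (AA.incl T x.2) := by
      conv_lhs => rw [AA.decomp x]
      rw [AA.emap_add, AA.emap_smul]
    have h1 : x.1 * lam + f x.2 = 0 := by
      have := congrArg (fun t : AA F V' T' => t.1) (hd.symm.trans hex)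
      exact this
    have h2 : x.1 • w' + g x.2 = y := by
      have := congrArg (fun t : AA F V' T' => t.2) (hd.symm.trans hex)
      exact this
    refine ⟨x.1, ?_⟩
    have hfx2 : f x.2 = -(x.1 * lam) := by
      linear_combination h1
    have hTy : T' y = x.1 • T' w' + T' (g x.2) := by
      rw [← h2, map_add, map_smul]
    rw [K2 x.2, hfx2] at hTy
    rw [hTy, hzdef, hTb]
    module
  have hz : z ≠ 0 := by
    intro h0
    apply hT'
    ext y
    obtain ⟨t, ht⟩ := K1' y
    rw [LinearMap.zero_apply, ht, h0, smul_zero]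
  have hTz : T' z = 0 := by
    have h1 : g (T v₀) = -z := by
      rw [hgT v₀, hf0, one_smul]
    have h2 := K2 (T v₀)
    rw [h1, hfT v₀, zero_smul, map_neg] at h2
    exact neg_eq_zero.1 h2
  obtain ⟨ψ, hψ⟩ : ∃ ψ : Module.Dual F V', ψ z ≠ 0 := by
    by_contra hc
    push_neg at hc
    exact hz ((Module.forall_dual_apply_eq_zero_iff F z).1 hc)
  set ℓ : V' →ₗ[F] F := (ψ z)⁻¹ • ψ with hℓ
  have hℓz : ℓ z = 1 := by
    show (ψ z)⁻¹ • ψ z = 1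
    rw [smul_eq_mul]
    exact inv_mul_cancel₀ hψ
  have K1 : ∀ y : V', T' y = ℓ (T' y) • T' b := by
    intro y
    obtain ⟨t, ht⟩ := K1' y
    rw [ht, map_smul, smul_eq_mul, ← hzdef, hℓz, mul_one]
  have hb1 : ℓ (T' b) = 1 := by rw [← hzdef]; exact hℓz
  have hz0 : T' (T' b) = 0 := by rw [← hzdef]; exact hTz
  set c : F := ℓ (T' a) with hc
  set σ : AA F V' T' ≃ₗ⁅F⁆ AA F V' T' := AA.sigma T' b ℓ c K1 hb1 hz0 with hσ
  refine ⟨e.trans σ, ?_⟩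
  intro v
  have htr : (e.trans σ) (AA.incl T v) = σ (e (AA.incl T v)) := rfl
  rw [htr]
  show c * f v - ℓ (T' (g v)) = 0
  rw [K2 v, map_smul, smul_eq_mul, ← hc]
  ring

end Helpers

/-- Two almost Abelian Lie algebras `F e₀ ⋉ V` and `F e₀' ⋉ V'` are isomorphic iff there are
`λ ∈ F*` and a linear isomorphism `φ : V → V'` with `φ ∘ ad_{e₀} = λ • ad_{e₀'} ∘ φ`. -/
theorem stmt15 (F V V' : Type*) [Field F] [AddCommGroup V] [Module F V]
    [AddCommGroup V'] [Module F V'] (T : Module.End F V) (T' : Module.End F V')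
    (hT : T ≠ 0) (hT' : T' ≠ 0) :
    Nonempty (AA F V T ≃ₗ⁅F⁆ AA F V' T') ↔
      ∃ (l : F) (φ : V ≃ₗ[F] V'), l ≠ 0 ∧ ∀ v : V, φ (T v) = l • T' (φ v) := by
  constructor
  · rintro ⟨e⟩
    by_cases h : ∀ v : V, (e (AA.incl T v)).1 = 0
    · exact AA.good T T' e h
    · push_neg at h
      obtain ⟨v₁, hv1⟩ := h
      obtain ⟨e', he'⟩ := AA.bad T T' hT' e v₁ hv1
      exact AA.good T T' e' he'
  · rintro ⟨l, φ, hl, h⟩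
    exact ⟨AA.ofCompat T T' l hl φ h⟩
end
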